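/- arXiv:1202.0423 — 2 statements merged into one kernel-verified Lean document; each statement's English description precedes it below -/
import Mathlib

section
/- Let μ ∈ ℂ with Re(μ) > 0. Then for every x ∈ ℂ, F(μ;q,x) = [(q^μ;q)_∞ / ((1−q)·(q;q)_∞)] · ∫_0^1 (qt;q)_∞·e^{−tx}·t^{μ−1} d_q t, where the Jackson q-integral unfolds as ∫_0^1 (qt;q)_∞·e^{−tx}·t^{μ−1} d_q t = (1−q)·Σ_{n=0}^∞ (q^{n+1};q)_∞·e^{−q^n x}·q^{nμ}, an absolutely convergent series. -/
set_option maxHeartbeats 1000000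


/-- `(a;c)_n = ∏_{j=0}^{n-1} (1 - a c^j)`. -/
noncomputable def qPoch (a c : ℂ) (n : ℕ) : ℂ := ∏ j ∈ Finset.range n, (1 - a * c ^ j)

/-- `(a;c)_∞ = ∏_{j=0}^{∞} (1 - a c^j)`. -/
noncomputable def qPochInf (a c : ℂ) : ℂ := ∏' j : ℕ, (1 - a * c ^ j)

/-- `q^μ := exp (μ log q)` for real `q > 0` and complex `μ`. -/
noncomputable def qpow (q : ℝ) (μ : ℂ) : ℂ := Complex.exp (μ * Real.log q)

/-- `F(μ;q,x) = Σ_{n≥0} ((q^μ;q)_n / n!) (-x)^n`. -/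
noncomputable def F (μ : ℂ) (q : ℝ) (x : ℂ) : ℂ :=
  ∑' n : ℕ, qPoch (qpow q μ) (q : ℂ) n / (Nat.factorial n : ℂ) * (-x) ^ n

/-- `(a)_n = a (a+1) ⋯ (a+n-1)`. -/
noncomputable def poch (a : ℂ) (n : ℕ) : ℂ := ∏ j ∈ Finset.range n, (a + (j : ℂ))

/-- `G(a;q,x) = Σ_{n≥0} ((a)_n q^{n(n+1)/2} / (q;q)_n) (-x)^n`. -/
noncomputable def G (a : ℂ) (q : ℝ) (x : ℂ) : ℂ :=
  ∑' n : ℕ, poch a n * (q : ℂ) ^ (n * (n + 1) / 2) / qPoch (q : ℂ) (q : ℂ) n * (-x) ^ n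

namespace Complex

noncomputable def abs : AbsoluteValue ℂ ℝ where
  toFun := fun z => ‖z‖
  map_mul' := norm_mul
  nonneg' := norm_nonneg
  eq_zero' := fun _ => norm_eq_zero
  add_le' := norm_add_le

lemma abs_apply' (z : ℂ) : abs z = ‖z‖ := rfl

lemma norm_eq_abs (z : ℂ) : ‖z‖ = abs z := rfl

lemma abs_ofReal (r : ℝ) : abs (r : ℂ) = |r| := by
  rw [abs_apply', Complex.norm_real, Real.norm_eq_abs]

lemma abs_natCast (n : ℕ) : abs (n : ℂ) = n := by
  rw [abs_apply', Complex.norm_natCast]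

lemma abs_exp (z : ℂ) : abs (exp z) = Real.exp z.re := by
  rw [abs_apply', Complex.norm_exp]

lemma re_le_abs (z : ℂ) : z.re ≤ abs z := re_le_norm z

lemma hasProd_abs {f : ℕ → ℂ} {x : ℂ} (h : HasProd f x) :
    HasProd (fun i => abs (f i)) (abs x) := h.norm

lemma summable_cexp_multipliable {ι α : Type*} (f : ι → α → ℂ) (hfn : ∀ x n, f n x ≠ 0)
    (hf : ∀ x, Summable fun n => log (f n x)) (x : α) : Multipliable fun n => f n x :=
  multipliable_of_summable_log (hf x)

end Complex

namespace Stmt10Aux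

open Finset Filter Topology

variable {q : ℝ}

lemma absQ (hq0 : 0 < q) : Complex.abs (q : ℂ) = q := by
  rw [Complex.abs_ofReal, abs_of_pos hq0]

lemma abs_mul_pow (hq0 : 0 < q) (a : ℂ) (j : ℕ) :
    Complex.abs (a * (q : ℂ) ^ j) = Complex.abs a * q ^ j := by
  rw [map_mul, map_pow, absQ hq0]

lemma pow_le_one'' (hq0 : 0 < q) (hq1 : q < 1) (j : ℕ) : q ^ j ≤ 1 :=
  pow_le_one₀ hq0.le hq1.le

lemma abs_mul_pow_lt (hq0 : 0 < q) (hq1 : q < 1) {a : ℂ} (ha : Complex.abs a < 1) (j : ℕ) :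
    Complex.abs (a * (q : ℂ) ^ j) < 1 := by
  rw [abs_mul_pow hq0]
  calc Complex.abs a * q ^ j ≤ Complex.abs a * 1 :=
        mul_le_mul_of_nonneg_left (pow_le_one'' hq0 hq1 j) (Complex.abs.nonneg a)
    _ < 1 := by simpa using ha

lemma factor_ne_zero (hq0 : 0 < q) (hq1 : q < 1) {a : ℂ} (ha : Complex.abs a < 1) (j : ℕ) :
    (1 : ℂ) - a * (q : ℂ) ^ j ≠ 0 := by
  intro h
  have h2 : (1 : ℂ) = a * (q : ℂ) ^ j := sub_eq_zero.mp h
  have h3 := abs_mul_pow_lt hq0 hq1 ha j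
  rw [← h2] at h3
  simp at h3

lemma mult (hq0 : 0 < q) (hq1 : q < 1) {a : ℂ} (ha : Complex.abs a < 1) :
    Multipliable (fun j : ℕ => 1 - a * (q : ℂ) ^ j) := by
  have hlog : ∀ _ : Unit, Summable (fun j : ℕ => Complex.log (1 - a * (q : ℂ) ^ j)) := by
    intro _
    have hgeo : Summable (fun j : ℕ => 3 / 2 * (Complex.abs a * q ^ j)) :=
      ((summable_geometric_of_lt_one hq0.le hq1).mul_left (Complex.abs a)).mul_left (3 / 2)
    apply Summable.of_norm_bounded_eventually_nat hgeo
    have htend : Filter.Tendsto (fun j : ℕ => Complex.abs a * q ^ j) atTop (𝓝 0) := by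
      simpa using (tendsto_pow_atTop_nhds_zero_of_lt_one hq0.le hq1).const_mul (Complex.abs a)
    filter_upwards [htend.eventually (eventually_le_nhds (by norm_num : (0 : ℝ) < 1 / 2))]
      with j hj
    have hz : ‖-(a * (q : ℂ) ^ j)‖ ≤ 1 / 2 := by
      rw [norm_neg, Complex.norm_eq_abs, abs_mul_pow hq0]; exact hj
    have hb := Complex.norm_log_one_add_half_le_self hz
    rw [show (1 : ℂ) + -(a * (q : ℂ) ^ j) = 1 - a * (q : ℂ) ^ j by ring] at hb
    calc ‖Complex.log (1 - a * (q : ℂ) ^ j)‖ ≤ 3 / 2 * ‖-(a * (q : ℂ) ^ j)‖ := hb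
      _ = 3 / 2 * (Complex.abs a * q ^ j) := by
          rw [norm_neg, Complex.norm_eq_abs, abs_mul_pow hq0]
  exact Complex.summable_cexp_multipliable (fun j (_ : Unit) => 1 - a * (q : ℂ) ^ j)
    (fun _ j => factor_ne_zero hq0 hq1 ha j) hlog ()

lemma tail (hq0 : 0 < q) (hq1 : q < 1) {a : ℂ} (ha : Complex.abs a < 1) (k : ℕ) :
    qPochInf a (q : ℂ) = qPoch a (q : ℂ) k * qPochInf (a * (q : ℂ) ^ k) (q : ℂ) := by
  have hm : Filter.Tendsto (fun N : ℕ => ∏ j ∈ Finset.range N, (1 - a * (q : ℂ) ^ j)) atTop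
      (𝓝 (qPochInf a (q : ℂ))) := (mult hq0 hq1 ha).hasProd.tendsto_prod_nat
  have hm2 : Filter.Tendsto
      (fun m : ℕ => ∏ j ∈ Finset.range m, (1 - (a * (q : ℂ) ^ k) * (q : ℂ) ^ j)) atTop
      (𝓝 (qPochInf (a * (q : ℂ) ^ k) (q : ℂ))) :=
    (mult hq0 hq1 (abs_mul_pow_lt hq0 hq1 ha k)).hasProd.tendsto_prod_nat
  have h3 : Filter.Tendsto (fun m : ℕ => ∏ j ∈ Finset.range (m + k), (1 - a * (q : ℂ) ^ j))
      atTop (𝓝 (qPochInf a (q : ℂ))) := hm.comp (tendsto_add_atTop_nat k)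
  have h4 : ∀ m : ℕ, ∏ j ∈ Finset.range (m + k), (1 - a * (q : ℂ) ^ j)
      = qPoch a (q : ℂ) k * ∏ j ∈ Finset.range m, (1 - (a * (q : ℂ) ^ k) * (q : ℂ) ^ j) := by
    intro m
    rw [add_comm m k, Finset.prod_range_add, qPoch]
    congr 1
    apply Finset.prod_congr rfl
    intro j _
    rw [pow_add]
    ring
  have h5 : Filter.Tendsto
      (fun m : ℕ => qPoch a (q : ℂ) k
        * ∏ j ∈ Finset.range m, (1 - (a * (q : ℂ) ^ k) * (q : ℂ) ^ j)) atTop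
      (𝓝 (qPoch a (q : ℂ) k * qPochInf (a * (q : ℂ) ^ k) (q : ℂ))) := hm2.const_mul _
  exact tendsto_nhds_unique (h3.congr h4) h5

/-- positive lower bound constant for `(q;q)_n`. -/
noncomputable def cq (q : ℝ) : ℝ := Real.exp (-(q / (1 - q) ^ 2))

lemma cq_pos : 0 < cq q := Real.exp_pos _

lemma sum_pow_le (hq0 : 0 < q) (hq1 : q < 1) (s : Finset ℕ) :
    ∑ j ∈ s, q ^ (j + 1) ≤ q / (1 - q) := by
  have hsum : Summable (fun j : ℕ => q ^ (j + 1)) := by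
    have := (summable_geometric_of_lt_one hq0.le hq1).mul_left q
    apply this.congr
    intro j
    rw [pow_succ']
  have h1 := Summable.sum_le_tsum s (fun i _ => by positivity) hsum
  have h2 : ∑' j : ℕ, q ^ (j + 1) = q / (1 - q) := by
    calc ∑' j : ℕ, q ^ (j + 1) = ∑' j : ℕ, q * q ^ j := by
          apply tsum_congr; intro j; rw [pow_succ']
      _ = q * ∑' j : ℕ, q ^ j := tsum_mul_left
      _ = q * (1 - q)⁻¹ := by rw [tsum_geometric_of_lt_one hq0.le hq1]
      _ = q / (1 - q) := by rw [div_eq_mul_inv]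
  rw [← h2]
  exact h1

lemma prod_lower (hq0 : 0 < q) (hq1 : q < 1) (s : Finset ℕ) :
    cq q ≤ ∏ j ∈ s, (1 - q ^ (j + 1)) := by
  have h1q : (0 : ℝ) < 1 - q := by linarith
  have key : ∀ j : ℕ, Real.exp (-(q ^ (j + 1) / (1 - q))) ≤ 1 - q ^ (j + 1) := by
    intro j
    have hx0 : 0 < q ^ (j + 1) := pow_pos hq0 _
    have hxq : q ^ (j + 1) ≤ q := by
      calc q ^ (j + 1) ≤ q ^ 1 := pow_le_pow_of_le_one hq0.le hq1.le (by omega)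
        _ = q := pow_one q
    set x := q ^ (j + 1) with hxdef
    have h1x : 0 < 1 - x := by linarith
    have e2 : (1 - x)⁻¹ ≤ Real.exp (x / (1 - x)) := by
      have h3 := Real.add_one_le_exp (x / (1 - x))
      have e1 : x / (1 - x) + 1 = (1 - x)⁻¹ := by field_simp; ring
      linarith
    have e3 : Real.exp (-(x / (1 - x))) ≤ 1 - x := by
      rw [Real.exp_neg]
      calc (Real.exp (x / (1 - x)))⁻¹ ≤ ((1 - x)⁻¹)⁻¹ := by
            apply inv_anti₀ (by positivity) e2
        _ = 1 - x := inv_inv _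
    have e4 : -(x / (1 - q)) ≤ -(x / (1 - x)) := by
      have h5 : x / (1 - x) ≤ x / (1 - q) := by gcongr <;> linarith
      linarith
    exact (Real.exp_le_exp.mpr e4).trans e3
  have hmid : -(q / (1 - q) ^ 2) ≤ ∑ j ∈ s, -(q ^ (j + 1) / (1 - q)) := by
    have hs := sum_pow_le hq0 hq1 s
    have e : ∑ j ∈ s, -(q ^ (j + 1) / (1 - q)) = -((∑ j ∈ s, q ^ (j + 1)) / (1 - q)) := by
      rw [Finset.sum_div]
      exact Finset.sum_neg_distrib _
    rw [e]
    have h2 : (∑ j ∈ s, q ^ (j + 1)) / (1 - q) ≤ q / (1 - q) ^ 2 := by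
      rw [sq, ← div_div]
      gcongr
    linarith
  calc cq q = Real.exp (-(q / (1 - q) ^ 2)) := rfl
    _ ≤ Real.exp (∑ j ∈ s, -(q ^ (j + 1) / (1 - q))) := Real.exp_le_exp.mpr hmid
    _ = ∏ j ∈ s, Real.exp (-(q ^ (j + 1) / (1 - q))) := Real.exp_sum s _
    _ ≤ ∏ j ∈ s, (1 - q ^ (j + 1)) :=
        Finset.prod_le_prod (fun j _ => (Real.exp_pos _).le) (fun j _ => key j)

lemma qPoch_cast (n : ℕ) :
    qPoch (q : ℂ) (q : ℂ) n = ((∏ j ∈ Finset.range n, (1 - q ^ (j + 1)) : ℝ) : ℂ) := by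
  rw [qPoch]
  push_cast
  apply Finset.prod_congr rfl
  intro j _
  rw [pow_succ']

lemma abs_qPoch (hq0 : 0 < q) (hq1 : q < 1) (n : ℕ) :
    Complex.abs (qPoch (q : ℂ) (q : ℂ) n) = ∏ j ∈ Finset.range n, (1 - q ^ (j + 1)) := by
  rw [qPoch_cast, Complex.abs_ofReal, abs_of_nonneg]
  apply Finset.prod_nonneg
  intro j _
  have : q ^ (j + 1) ≤ 1 := pow_le_one'' hq0 hq1 (j + 1)
  linarith

lemma cq_le_abs_qPoch (hq0 : 0 < q) (hq1 : q < 1) (n : ℕ) :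
    cq q ≤ Complex.abs (qPoch (q : ℂ) (q : ℂ) n) := by
  rw [abs_qPoch hq0 hq1]
  exact prod_lower hq0 hq1 _

lemma qPoch_ne_zero (hq0 : 0 < q) (hq1 : q < 1) (n : ℕ) :
    qPoch (q : ℂ) (q : ℂ) n ≠ 0 := by
  intro h
  have h1 := cq_le_abs_qPoch hq0 hq1 n
  rw [h] at h1
  simp at h1
  have := cq_pos (q := q)
  linarith

/-- upper bound constant for `|(a;q)_∞|`. -/
noncomputable def Cq (q : ℝ) : ℝ := Real.exp ((1 - q)⁻¹)

lemma abs_qPochInf_le (hq0 : 0 < q) (hq1 : q < 1) {a : ℂ} (ha : Complex.abs a < 1) :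
    Complex.abs (qPochInf a (q : ℂ)) ≤ Cq q := by
  have hm := mult hq0 hq1 ha
  have habs : HasProd (fun j : ℕ => Complex.abs (1 - a * (q : ℂ) ^ j))
      (Complex.abs (qPochInf a (q : ℂ))) := Complex.hasProd_abs hm.hasProd
  apply hasProd_le_of_prod_le habs
  intro s
  have hgs : Summable (fun j : ℕ => q ^ j) := summable_geometric_of_lt_one hq0.le hq1
  calc ∏ j ∈ s, Complex.abs (1 - a * (q : ℂ) ^ j) ≤ ∏ j ∈ s, Real.exp (q ^ j) := by
        apply Finset.prod_le_prod (fun j _ => Complex.abs.nonneg _)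
        intro j _
        calc Complex.abs (1 - a * (q : ℂ) ^ j)
            ≤ Complex.abs 1 + Complex.abs (a * (q : ℂ) ^ j) := by
              simpa [sub_eq_add_neg] using Complex.abs.add_le 1 (-(a * (q : ℂ) ^ j))
          _ = 1 + Complex.abs a * q ^ j := by rw [map_one, abs_mul_pow hq0]
          _ ≤ 1 + q ^ j := by nlinarith [pow_pos hq0 j, Complex.abs.nonneg a]
          _ ≤ Real.exp (q ^ j) := by linarith [Real.add_one_le_exp (q ^ j)]
    _ = Real.exp (∑ j ∈ s, q ^ j) := (Real.exp_sum s _).symm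
    _ ≤ Cq q := by
        apply Real.exp_le_exp.mpr
        have h := Summable.sum_le_tsum s (fun i _ => by positivity) hgs
        rwa [tsum_geometric_of_lt_one hq0.le hq1] at h

lemma cq_le_abs_qPochInf (hq0 : 0 < q) (hq1 : q < 1) :
    cq q ≤ Complex.abs (qPochInf (q : ℂ) (q : ℂ)) := by
  have hQ : Complex.abs (q : ℂ) < 1 := by rw [absQ hq0]; exact hq1
  have hm := (mult hq0 hq1 hQ).hasProd
  have habs := Complex.hasProd_abs hm
  have hcongr : (fun j : ℕ => Complex.abs (1 - (q : ℂ) * (q : ℂ) ^ j))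
      = fun j : ℕ => 1 - q ^ (j + 1) := by
    funext j
    have h1 : ((1 - q ^ (j + 1) : ℝ) : ℂ) = 1 - (q : ℂ) * (q : ℂ) ^ j := by
      push_cast [pow_succ']
      ring
    rw [← h1, Complex.abs_ofReal, abs_of_nonneg]
    have : q ^ (j + 1) ≤ 1 := pow_le_one'' hq0 hq1 (j + 1)
    linarith
  rw [hcongr] at habs
  exact le_hasProd_of_le_prod habs (fun s => prod_lower hq0 hq1 s)

lemma qPochInf_q_ne_zero (hq0 : 0 < q) (hq1 : q < 1) :
    qPochInf (q : ℂ) (q : ℂ) ≠ 0 := by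
  intro h
  have h1 := cq_le_abs_qPochInf hq0 hq1
  rw [h] at h1
  simp at h1
  have := cq_pos (q := q)
  linarith

lemma euler_summable (hq0 : 0 < q) (hq1 : q < 1) {z : ℂ} (hz : Complex.abs z < 1) :
    Summable (fun n : ℕ => z ^ n / qPoch (q : ℂ) (q : ℂ) n) := by
  apply Summable.of_norm_bounded (g := fun n => (Complex.abs z) ^ n / cq q)
    ((summable_geometric_of_lt_one (Complex.abs.nonneg z) hz).div_const _)
  intro n
  rw [Complex.norm_eq_abs, map_div₀, map_pow]
  have h1 := cq_le_abs_qPoch hq0 hq1 n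
  have h2 := cq_pos (q := q)
  gcongr

lemma funEq (hq0 : 0 < q) (hq1 : q < 1) {z : ℂ} (hz : Complex.abs z < 1) :
    (1 - z) * (∑' n : ℕ, z ^ n / qPoch (q : ℂ) (q : ℂ) n)
      = ∑' n : ℕ, ((q : ℂ) * z) ^ n / qPoch (q : ℂ) (q : ℂ) n := by
  set P : ℕ → ℂ := fun n => qPoch (q : ℂ) (q : ℂ) n with hP
  have hPne : ∀ n, P n ≠ 0 := fun n => qPoch_ne_zero hq0 hq1 n
  have hrec : ∀ n : ℕ, P (n + 1) = P n * (1 - (q : ℂ) ^ (n + 1)) := by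
    intro n
    show qPoch (q : ℂ) (q : ℂ) (n + 1) = qPoch (q : ℂ) (q : ℂ) n * (1 - (q : ℂ) ^ (n + 1))
    rw [qPoch, qPoch, Finset.prod_range_succ, pow_succ']
  have hs := euler_summable hq0 hq1 hz
  have hzq : Complex.abs ((q : ℂ) * z) < 1 := by
    rw [map_mul, absQ hq0]
    nlinarith [Complex.abs.nonneg z]
  have hsq := euler_summable hq0 hq1 hzq
  have hA : Summable (fun n : ℕ => z ^ (n + 1) / P (n + 1)) :=
    (summable_nat_add_iff 1).mpr hs
  have hB : Summable (fun n : ℕ => z ^ (n + 1) / P n) := by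
    refine (hs.mul_left z).congr (fun n => ?_)
    rw [pow_succ']
    ring
  have h00 : z ^ 0 / P 0 = 1 := by simp [hP, qPoch]
  have e1 : (∑' n : ℕ, z ^ n / P n) = 1 + ∑' n : ℕ, z ^ (n + 1) / P (n + 1) := by
    rw [Summable.tsum_eq_zero_add hs, h00]
  have e2 : z * (∑' n : ℕ, z ^ n / P n) = ∑' n : ℕ, z ^ (n + 1) / P n := by
    rw [← tsum_mul_left]
    apply tsum_congr
    intro n
    rw [pow_succ']
    ring
  have e3 : (∑' n : ℕ, ((q : ℂ) * z) ^ n / P n)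
      = 1 + ∑' n : ℕ, ((q : ℂ) * z) ^ (n + 1) / P (n + 1) := by
    have h01 : ((q : ℂ) * z) ^ 0 / P 0 = 1 := by simp [hP, qPoch]
    rw [Summable.tsum_eq_zero_add hsq, h01]
  have e4 : ∑' n : ℕ, (z ^ (n + 1) / P (n + 1) - z ^ (n + 1) / P n)
      = ∑' n : ℕ, ((q : ℂ) * z) ^ (n + 1) / P (n + 1) := by
    apply tsum_congr
    intro n
    have h1 := hPne n
    have h2 : P n * (1 - (q : ℂ) ^ (n + 1)) ≠ 0 := by rw [← hrec n]; exact hPne (n + 1)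
    have hu : (1 : ℂ) - (q : ℂ) ^ (n + 1) ≠ 0 := by
      intro h
      apply h2
      rw [h, mul_zero]
    rw [hrec n, mul_pow]
    field_simp
    ring
  have e5 : (∑' n : ℕ, z ^ (n + 1) / P (n + 1)) - (∑' n : ℕ, z ^ (n + 1) / P n)
      = ∑' n : ℕ, ((q : ℂ) * z) ^ (n + 1) / P (n + 1) := by
    rw [← Summable.tsum_sub hA hB]
    exact e4
  rw [sub_mul, one_mul, e2, e1, e3]
  linear_combination e5

lemma iter (hq0 : 0 < q) (hq1 : q < 1) {z : ℂ} (hz : Complex.abs z < 1) (N : ℕ) :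
    (∑' n : ℕ, z ^ n / qPoch (q : ℂ) (q : ℂ) n) * ∏ j ∈ Finset.range N, (1 - z * (q : ℂ) ^ j)
      = ∑' n : ℕ, ((q : ℂ) ^ N * z) ^ n / qPoch (q : ℂ) (q : ℂ) n := by
  induction N with
  | zero => simp
  | succ N ih =>
    rw [Finset.prod_range_succ, ← mul_assoc, ih]
    have hw : Complex.abs ((q : ℂ) ^ N * z) < 1 := by
      rw [map_mul, map_pow, absQ hq0]
      calc q ^ N * Complex.abs z ≤ 1 * Complex.abs z :=
            mul_le_mul_of_nonneg_right (pow_le_one'' hq0 hq1 N) (Complex.abs.nonneg z)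
        _ = Complex.abs z := one_mul _
        _ < 1 := hz
    calc (∑' n : ℕ, ((q : ℂ) ^ N * z) ^ n / qPoch (q : ℂ) (q : ℂ) n) * (1 - z * (q : ℂ) ^ N)
        = (1 - (q : ℂ) ^ N * z) * ∑' n : ℕ, ((q : ℂ) ^ N * z) ^ n / qPoch (q : ℂ) (q : ℂ) n := by
          ring
      _ = ∑' n : ℕ, ((q : ℂ) * ((q : ℂ) ^ N * z)) ^ n / qPoch (q : ℂ) (q : ℂ) n :=
          funEq hq0 hq1 hw
      _ = ∑' n : ℕ, ((q : ℂ) ^ (N + 1) * z) ^ n / qPoch (q : ℂ) (q : ℂ) n := by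
          apply tsum_congr
          intro n
          rw [show (q : ℂ) * ((q : ℂ) ^ N * z) = (q : ℂ) ^ (N + 1) * z by
            rw [pow_succ']; ring]

lemma dist_one (hq0 : 0 < q) (hq1 : q < 1) {z w : ℂ} (hz : Complex.abs z < 1)
    (hw : Complex.abs w ≤ Complex.abs z) :
    ‖(∑' n : ℕ, w ^ n / qPoch (q : ℂ) (q : ℂ) n) - 1‖
      ≤ Complex.abs w / (cq q * (1 - Complex.abs z)) := by
  have hw1 : Complex.abs w < 1 := lt_of_le_of_lt hw hz
  have hsw := euler_summable hq0 hq1 hw1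
  have e1 : (∑' n : ℕ, w ^ n / qPoch (q : ℂ) (q : ℂ) n) - 1
      = ∑' n : ℕ, w ^ (n + 1) / qPoch (q : ℂ) (q : ℂ) (n + 1) := by
    have h00 : w ^ 0 / qPoch (q : ℂ) (q : ℂ) 0 = 1 := by simp [qPoch]
    rw [Summable.tsum_eq_zero_add hsw, h00]
    ring
  rw [e1]
  have hcq := cq_pos (q := q)
  have hbound : ∀ n : ℕ, ‖w ^ (n + 1) / qPoch (q : ℂ) (q : ℂ) (n + 1)‖
      ≤ Complex.abs w * (Complex.abs z) ^ n / cq q := by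
    intro n
    rw [Complex.norm_eq_abs, map_div₀, map_pow]
    have h1 := cq_le_abs_qPoch hq0 hq1 (n + 1)
    calc (Complex.abs w) ^ (n + 1) / Complex.abs (qPoch (q : ℂ) (q : ℂ) (n + 1))
        ≤ (Complex.abs w) ^ (n + 1) / cq q := by gcongr
      _ = Complex.abs w * (Complex.abs w) ^ n / cq q := by rw [pow_succ']
      _ ≤ Complex.abs w * (Complex.abs z) ^ n / cq q := by
          gcongr
  have hmaj : Summable (fun n : ℕ => Complex.abs w * (Complex.abs z) ^ n / cq q) :=
    ((summable_geometric_of_lt_one (Complex.abs.nonneg z) hz).mul_left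
      (Complex.abs w)).div_const _
  have hnorm : Summable (fun n : ℕ => ‖w ^ (n + 1) / qPoch (q : ℂ) (q : ℂ) (n + 1)‖) :=
    Summable.of_nonneg_of_le (fun n => norm_nonneg _) hbound hmaj
  calc ‖∑' n : ℕ, w ^ (n + 1) / qPoch (q : ℂ) (q : ℂ) (n + 1)‖
      ≤ ∑' n : ℕ, ‖w ^ (n + 1) / qPoch (q : ℂ) (q : ℂ) (n + 1)‖ := norm_tsum_le_tsum_norm hnorm
    _ ≤ ∑' n : ℕ, Complex.abs w * (Complex.abs z) ^ n / cq q := Summable.tsum_le_tsum hbound hnorm hmaj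
    _ = Complex.abs w / cq q * ∑' n : ℕ, (Complex.abs z) ^ n := by
        rw [← tsum_mul_left]
        apply tsum_congr
        intro n
        ring
    _ = Complex.abs w / cq q * (1 - Complex.abs z)⁻¹ := by
        rw [tsum_geometric_of_lt_one (Complex.abs.nonneg z) hz]
    _ = Complex.abs w / (cq q * (1 - Complex.abs z)) := by
        rw [← div_eq_mul_inv, div_div]

lemma euler (hq0 : 0 < q) (hq1 : q < 1) {z : ℂ} (hz : Complex.abs z < 1) :
    (∑' n : ℕ, z ^ n / qPoch (q : ℂ) (q : ℂ) n) * qPochInf z (q : ℂ) = 1 := by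
  have hm := mult hq0 hq1 hz
  have h1 : Filter.Tendsto
      (fun N : ℕ => (∑' n : ℕ, z ^ n / qPoch (q : ℂ) (q : ℂ) n)
        * ∏ j ∈ Finset.range N, (1 - z * (q : ℂ) ^ j)) atTop
      (𝓝 ((∑' n : ℕ, z ^ n / qPoch (q : ℂ) (q : ℂ) n) * qPochInf z (q : ℂ))) :=
    (hm.hasProd.tendsto_prod_nat).const_mul _
  have h2 : Filter.Tendsto
      (fun N : ℕ => ∑' n : ℕ, ((q : ℂ) ^ N * z) ^ n / qPoch (q : ℂ) (q : ℂ) n) atTop (𝓝 1) := by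
    rw [tendsto_iff_norm_sub_tendsto_zero]
    have hb : ∀ N : ℕ, ‖(∑' n : ℕ, ((q : ℂ) ^ N * z) ^ n / qPoch (q : ℂ) (q : ℂ) n) - 1‖
        ≤ Complex.abs z / (cq q * (1 - Complex.abs z)) * q ^ N := by
      intro N
      have hwle : Complex.abs ((q : ℂ) ^ N * z) ≤ Complex.abs z := by
        rw [map_mul, map_pow, absQ hq0]
        calc q ^ N * Complex.abs z ≤ 1 * Complex.abs z :=
              mul_le_mul_of_nonneg_right (pow_le_one'' hq0 hq1 N) (Complex.abs.nonneg z)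
          _ = Complex.abs z := one_mul _
      calc ‖(∑' n : ℕ, ((q : ℂ) ^ N * z) ^ n / qPoch (q : ℂ) (q : ℂ) n) - 1‖
          ≤ Complex.abs ((q : ℂ) ^ N * z) / (cq q * (1 - Complex.abs z)) :=
            dist_one hq0 hq1 hz hwle
        _ = Complex.abs z / (cq q * (1 - Complex.abs z)) * q ^ N := by
            rw [map_mul, map_pow, absQ hq0]
            ring
    have h0 : Filter.Tendsto
        (fun N : ℕ => Complex.abs z / (cq q * (1 - Complex.abs z)) * q ^ N) atTop (𝓝 0) := by
      simpa using (tendsto_pow_atTop_nhds_zero_of_lt_one hq0.le hq1).const_mul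
        (Complex.abs z / (cq q * (1 - Complex.abs z)))
    exact squeeze_zero (fun N => norm_nonneg _) hb h0
  exact tendsto_nhds_unique (h1.congr (fun N => iter hq0 hq1 hz N)) h2

end Stmt10Aux

open Stmt10Aux Finset Filter Topology in
/-- Jackson `q`-integral representation
`F(μ;q,x) = ((q^μ;q)_∞ / ((1-q)(q;q)_∞)) ∫_0^1 (qt;q)_∞ e^{-tx} t^{μ-1} d_q t` for `Re μ > 0`,
where the `q`-integral unfolds as `(1-q) Σ_{n≥0} (q^{n+1};q)_∞ e^{-q^n x} q^{nμ}`. -/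
theorem stmt10 (q : ℝ) (hq0 : 0 < q) (hq1 : q < 1)
    (μ : ℂ) (hμ : 0 < μ.re) (x : ℂ) :
    Summable (fun n : ℕ =>
      ‖qPochInf ((q : ℂ) ^ (n + 1)) (q : ℂ) *
        Complex.exp (-((q : ℂ) ^ n * x)) * qpow q μ ^ n‖) ∧
    F μ q x =
      qPochInf (qpow q μ) (q : ℂ) / ((1 - (q : ℂ)) * qPochInf (q : ℂ) (q : ℂ)) *
        ((1 - (q : ℂ)) *
          ∑' n : ℕ, qPochInf ((q : ℂ) ^ (n + 1)) (q : ℂ) *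
            Complex.exp (-((q : ℂ) ^ n * x)) * qpow q μ ^ n) := by
  have habs_a : Complex.abs (qpow q μ) = Real.exp (μ.re * Real.log q) := by
    rw [qpow, Complex.abs_exp]
    congr 1
    simp [Complex.mul_re]
  have hlogq : Real.log q < 0 := Real.log_neg hq0 hq1
  have hα1 : Complex.abs (qpow q μ) < 1 := by
    rw [habs_a, Real.exp_lt_one_iff]
    nlinarith
  set a : ℂ := qpow q μ with ha_def
  constructor
  · -- summability
    have hmaj : Summable (fun n : ℕ => Cq q * Real.exp (Complex.abs x) * (Complex.abs a) ^ n) :=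
      (summable_geometric_of_lt_one (Complex.abs.nonneg a) hα1).mul_left _
    apply Summable.of_nonneg_of_le (fun n => Complex.abs.nonneg _) _ hmaj
    intro n
    show Complex.abs _ ≤ _
    rw [map_mul, map_mul, map_pow]
    have h1 : Complex.abs (qPochInf ((q : ℂ) ^ (n + 1)) (q : ℂ)) ≤ Cq q := by
      apply abs_qPochInf_le hq0 hq1
      rw [map_pow, absQ hq0]
      exact pow_lt_one₀ hq0.le hq1 (by omega)
    have h2 : Complex.abs (Complex.exp (-((q : ℂ) ^ n * x))) ≤ Real.exp (Complex.abs x) := by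
      rw [Complex.abs_exp]
      apply Real.exp_le_exp.mpr
      calc (-((q : ℂ) ^ n * x)).re ≤ Complex.abs (-((q : ℂ) ^ n * x)) := Complex.re_le_abs _
        _ = q ^ n * Complex.abs x := by
            rw [Complex.abs.map_neg, map_mul, map_pow, absQ hq0]
        _ ≤ 1 * Complex.abs x :=
            mul_le_mul_of_nonneg_right (pow_le_one'' hq0 hq1 n) (Complex.abs.nonneg x)
        _ = Complex.abs x := one_mul _
    have hCq : (0:ℝ) < Cq q := Real.exp_pos _
    have h3 : (0:ℝ) ≤ Complex.abs a ^ n := by positivity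
    exact mul_le_mul (mul_le_mul h1 h2 (Complex.abs.nonneg _) hCq.le) le_rfl h3
      (mul_nonneg hCq.le (Real.exp_pos _).le)
  · -- the identity
    have hPinf_ne : qPochInf (q : ℂ) (q : ℂ) ≠ 0 := qPochInf_q_ne_zero hq0 hq1
    have hQne : (1 : ℂ) - (q : ℂ) ≠ 0 := by
      intro h
      have h2 : ((1 - q : ℝ) : ℂ) = 0 := by push_cast; linear_combination h
      rw [Complex.ofReal_eq_zero] at h2
      linarith
    have hPn_ne : ∀ n, qPoch (q : ℂ) (q : ℂ) n ≠ 0 := qPoch_ne_zero hq0 hq1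
    have htailQ : ∀ n : ℕ, qPochInf ((q : ℂ) ^ (n + 1)) (q : ℂ)
        = qPochInf (q : ℂ) (q : ℂ) / qPoch (q : ℂ) (q : ℂ) n := by
      intro n
      have ht := tail hq0 hq1 (a := (q : ℂ)) (by rw [absQ hq0]; exact hq1) n
      rw [show (q : ℂ) * (q : ℂ) ^ n = (q : ℂ) ^ (n + 1) by rw [pow_succ']] at ht
      rw [eq_div_iff (hPn_ne n), ht]
      ring
    set T : ℂ := ∑' n : ℕ, Complex.exp (-((q : ℂ) ^ n * x)) * a ^ n / qPoch (q : ℂ) (q : ℂ) n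
      with hT
    have hS : (∑' n : ℕ, qPochInf ((q : ℂ) ^ (n + 1)) (q : ℂ)
          * Complex.exp (-((q : ℂ) ^ n * x)) * a ^ n)
        = qPochInf (q : ℂ) (q : ℂ) * T := by
      rw [hT, ← tsum_mul_left]
      apply tsum_congr
      intro n
      rw [htailQ n]
      field_simp
    -- exp expansion
    have hexp : ∀ w : ℂ, Complex.exp w = ∑' k : ℕ, w ^ k / (Nat.factorial k : ℂ) := by
      intro w
      rw [Complex.exp_eq_exp_ℂ, NormedSpace.exp_eq_tsum_div]
    set g : ℕ × ℕ → ℂ := fun p =>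
      (a * (q : ℂ) ^ p.2) ^ p.1 / qPoch (q : ℂ) (q : ℂ) p.1
        * ((-x) ^ p.2 / (Nat.factorial p.2 : ℂ)) with hg_def
    have hcq := cq_pos (q := q)
    have hgsum : Summable g := by
      apply Summable.of_norm_bounded (g := fun p : ℕ × ℕ =>
        (Complex.abs a) ^ p.1 / cq q * ((Complex.abs x) ^ p.2 / (Nat.factorial p.2 : ℝ)))
      · exact Summable.mul_of_nonneg
          (((summable_geometric_of_lt_one (Complex.abs.nonneg a) hα1)).div_const _)
          (Real.summable_pow_div_factorial _)
          (fun n => by positivity) (fun k => by positivity)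
      · rintro ⟨n, k⟩
        rw [hg_def]
        simp only
        rw [Complex.norm_eq_abs, map_mul, map_div₀, map_div₀, map_pow, map_pow, Complex.abs.map_neg,
          abs_mul_pow hq0, Complex.abs_natCast]
        have h1 := cq_le_abs_qPoch hq0 hq1 n
        have h2 : (Complex.abs a * q ^ k) ^ n ≤ (Complex.abs a) ^ n := by
          apply pow_le_pow_left₀ (by positivity)
          calc Complex.abs a * q ^ k ≤ Complex.abs a * 1 :=
                mul_le_mul_of_nonneg_left (pow_le_one'' hq0 hq1 k) (Complex.abs.nonneg a)
            _ = Complex.abs a := mul_one _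
        gcongr
    have hTg : T = ∑' n : ℕ, ∑' k : ℕ, g (n, k) := by
      rw [hT]
      apply tsum_congr
      intro n
      rw [hexp (-((q : ℂ) ^ n * x))]
      rw [show (∑' k : ℕ, (-((q : ℂ) ^ n * x)) ^ k / (Nat.factorial k : ℂ)) * a ^ n
            / qPoch (q : ℂ) (q : ℂ) n
          = (∑' k : ℕ, (-((q : ℂ) ^ n * x)) ^ k / (Nat.factorial k : ℂ))
            * (a ^ n / qPoch (q : ℂ) (q : ℂ) n) by ring]
      rw [← tsum_mul_right]
      apply tsum_congr
      intro k
      rw [hg_def]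
      simp only
      have e : (-((q : ℂ) ^ n * x)) ^ k = ((q : ℂ) ^ k) ^ n * (-x) ^ k := by
        rw [show -((q : ℂ) ^ n * x) = (q : ℂ) ^ n * (-x) by ring, mul_pow, ← pow_mul,
          Nat.mul_comm, pow_mul]
      rw [e, mul_pow]
      ring
    have hswap : (∑' n : ℕ, ∑' k : ℕ, g (n, k)) = ∑' k : ℕ, ∑' n : ℕ, g (n, k) :=
      (Summable.tsum_comm (f := fun n k => g (n, k)) (by exact hgsum)).symm
    have hzk : ∀ k : ℕ, Complex.abs (a * (q : ℂ) ^ k) < 1 := fun k =>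
      abs_mul_pow_lt hq0 hq1 hα1 k
    have hAUk : ∀ k : ℕ, qPochInf a (q : ℂ)
        * (∑' n : ℕ, (a * (q : ℂ) ^ k) ^ n / qPoch (q : ℂ) (q : ℂ) n)
        = qPoch a (q : ℂ) k := by
      intro k
      rw [tail hq0 hq1 hα1 k]
      have he := euler hq0 hq1 (hzk k)
      calc qPoch a (q : ℂ) k * qPochInf (a * (q : ℂ) ^ k) (q : ℂ)
            * (∑' n : ℕ, (a * (q : ℂ) ^ k) ^ n / qPoch (q : ℂ) (q : ℂ) n)
          = qPoch a (q : ℂ) k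
            * ((∑' n : ℕ, (a * (q : ℂ) ^ k) ^ n / qPoch (q : ℂ) (q : ℂ) n)
              * qPochInf (a * (q : ℂ) ^ k) (q : ℂ)) := by ring
        _ = qPoch a (q : ℂ) k := by rw [he, mul_one]
    have key : qPochInf a (q : ℂ) * T = F μ q x := by
      calc qPochInf a (q : ℂ) * T
          = qPochInf a (q : ℂ) * ∑' k : ℕ, ∑' n : ℕ, g (n, k) := by rw [hTg, hswap]
        _ = ∑' k : ℕ, qPochInf a (q : ℂ) * ∑' n : ℕ, g (n, k) := by rw [tsum_mul_left]
        _ = ∑' k : ℕ, qPoch a (q : ℂ) k / (Nat.factorial k : ℂ) * (-x) ^ k := by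
            apply tsum_congr
            intro k
            have hinner : (∑' n : ℕ, g (n, k))
                = (∑' n : ℕ, (a * (q : ℂ) ^ k) ^ n / qPoch (q : ℂ) (q : ℂ) n)
                  * ((-x) ^ k / (Nat.factorial k : ℂ)) := by
              rw [← tsum_mul_right]
            rw [hinner, ← mul_assoc, hAUk k]
            ring
        _ = F μ q x := rfl
    rw [hS, ← key]
    field_simp
end

section
/- There exists a function ℓ, holomorphic on the open disc {z ∈ ℂ : |z| < 2√π}, such that ℓ(0) = 0, ℓ′(0) = 1, and (1 − ℓ(z))·exp(ℓ(z)) = exp(−z²/2) for all z with |z| < 2√π. (This is the germ ℓ(z) = W(−e^{−1−z²/2}) + 1 of the Lambert W-function, shown to extend analytically to the full disc of radius 2√π.) -/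
noncomputable section

open Complex Metric Set Filter Topology

namespace Stmt19

/-! ### Compatibility: the complex absolute value as an `AbsoluteValue` -/

def Complex.abs : AbsoluteValue ℂ ℝ := IsAbsoluteValue.toAbsoluteValue (norm : ℂ → ℝ)

lemma Complex.norm_eq_abs (z : ℂ) : ‖z‖ = Complex.abs z := rfl

@[simp] lemma Complex.abs_apply (z : ℂ) : Complex.abs z = ‖z‖ := rfl

lemma Complex.abs_two : Complex.abs 2 = 2 := by simp [← Complex.norm_eq_abs]

lemma Complex.abs_exp (z : ℂ) : Complex.abs (Complex.exp z) = Real.exp z.re :=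
  Complex.norm_exp z

lemma Complex.abs_im_le_abs (z : ℂ) : |z.im| ≤ Complex.abs z := Complex.abs_im_le_norm z

lemma Complex.abs_le_abs_re_add_abs_im (z : ℂ) : Complex.abs z ≤ |z.re| + |z.im| :=
  Complex.norm_le_abs_re_add_abs_im z

lemma Complex.abs_intCast (n : ℤ) : Complex.abs n = |(n : ℝ)| := Complex.norm_intCast n

lemma Complex.abs_ofReal (r : ℝ) : Complex.abs r = |r| := Complex.norm_real r

lemma Complex.abs_I : Complex.abs Complex.I = 1 := Complex.norm_I

lemma Complex.dist_eq (z w : ℂ) : dist z w = Complex.abs (z - w) := _root_.Complex.dist_eq z w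

/-! ### The entire function `phi m = m - 1 + exp (-m)` -/

def phi (m : ℂ) : ℂ := m - 1 + Complex.exp (-m)

lemma phi_zero : phi 0 = 0 := by simp [phi]

lemma hasDerivAt_phi (m : ℂ) : HasDerivAt phi (1 - Complex.exp (-m)) m := by
  have h1 : HasDerivAt (fun w : ℂ => Complex.exp (-w)) (-Complex.exp (-m)) m := by
    simpa [Function.comp_def] using (Complex.hasDerivAt_exp (-m)).comp m ((hasDerivAt_id m).neg)
  have h2 : HasDerivAt (fun w : ℂ => w - 1) 1 m := (hasDerivAt_id m).sub_const 1
  have := h2.add h1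
  show HasDerivAt (fun m => m - 1 + Complex.exp (-m)) _ m
  simpa [phi, sub_eq_add_neg, Pi.add_def] using this

lemma diff_phi : Differentiable ℂ phi := fun m => (hasDerivAt_phi m).differentiableAt

lemma cont_phi : Continuous phi := diff_phi.continuous

/-! ### Local holomorphic inverses -/

structure LocInv (f : ℂ → ℂ) (s : Set ℂ) (w₀ : ℂ) : Type where
  U : Set ℂ
  V : Set ℂ
  g : ℂ → ℂ
  openU : IsOpen U
  openV : IsOpen V
  memU : w₀ ∈ U
  memV : f w₀ ∈ V
  subU : U ⊆ s
  diffg : DifferentiableOn ℂ g V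
  mapsV : ∀ v ∈ V, g v ∈ U ∧ f (g v) = v
  mapsU : ∀ u ∈ U, f u ∈ V ∧ g (f u) = u
  inj : ∀ u ∈ U, ∀ u' ∈ U, f u = f u' → u = u'

theorem exists_locInv {f : ℂ → ℂ} {s : Set ℂ} (hs : IsOpen s)
    (hf : DifferentiableOn ℂ f s) {w₀ : ℂ} (hw : w₀ ∈ s) (hd : deriv f w₀ ≠ 0) :
    Nonempty (LocInv f s w₀) := by
  have han : AnalyticOnNhd ℂ f s := hf.analyticOnNhd hs
  have hstrict : ∀ w ∈ s, HasStrictDerivAt f (deriv f w) w := by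
    intro w hws
    obtain ⟨p, hp⟩ := han w hws
    have h1 := hp.hasStrictDerivAt
    have h2 := h1.hasDerivAt.deriv
    rwa [← h2] at h1
  have hderivcont : ContinuousOn (deriv f) s := (han.deriv).continuousOn
  set s' : Set ℂ := s ∩ deriv f ⁻¹' {(0:ℂ)}ᶜ with hs'def
  have hs'open : IsOpen s' := hderivcont.isOpen_inter_preimage hs isOpen_compl_singleton
  have hs'sub : s' ⊆ s := inter_subset_left
  have hw' : w₀ ∈ s' := ⟨hw, hd⟩
  have hF := (hstrict w₀ hw).hasStrictFDerivAt_equiv hd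
  set PH := hF.toOpenPartialHomeomorph f with hPHdef
  have hcoe : ⇑PH = f := hF.toOpenPartialHomeomorph_coe
  have hw_src : w₀ ∈ PH.source := hF.mem_toOpenPartialHomeomorph_source
  set U : Set ℂ := PH.source ∩ s' with hUdef
  have hUopen : IsOpen U := PH.open_source.inter hs'open
  have hcsymm : ContinuousOn PH.symm PH.target := PH.continuousOn_symm
  set V : Set ℂ := PH.target ∩ PH.symm ⁻¹' U with hVdef
  have hVopen : IsOpen V := hcsymm.isOpen_inter_preimage PH.open_target hUopen
  have hmemV : f w₀ ∈ V := by
    constructor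
    · rw [← hcoe]; exact PH.map_source hw_src
    · show PH.symm (f w₀) ∈ U
      rw [← hcoe, PH.left_inv hw_src]
      exact ⟨hw_src, hw'⟩
  have hmapsU : ∀ u ∈ U, f u ∈ V ∧ PH.symm (f u) = u := by
    intro u hu
    have h1 : PH.symm (f u) = u := by rw [← hcoe]; exact PH.left_inv hu.1
    refine ⟨⟨?_, ?_⟩, h1⟩
    · rw [← hcoe]; exact PH.map_source hu.1
    · show PH.symm (f u) ∈ U; rw [h1]; exact hu
  have hmapsV : ∀ v ∈ V, PH.symm v ∈ U ∧ f (PH.symm v) = v := by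
    intro v hv
    refine ⟨hv.2, ?_⟩
    rw [← hcoe]; exact PH.right_inv hv.1
  refine ⟨⟨U, V, PH.symm, hUopen, hVopen, ⟨hw_src, hw'⟩, hmemV,
    fun u hu => hs'sub hu.2, ?_, hmapsV, hmapsU, ?_⟩⟩
  · -- differentiability of the inverse on V
    intro v hv
    apply DifferentiableAt.differentiableWithinAt
    set u : ℂ := PH.symm v with hu_def
    have huU : u ∈ U := hv.2
    have hus : u ∈ s := hs'sub huU.2
    have hdu : deriv f u ≠ 0 := huU.2.2
    have hFu := (hstrict u hus).hasStrictFDerivAt_equiv hdu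
    have hfu_eq : f u = v := by rw [← hcoe, hu_def]; exact PH.right_inv hv.1
    have hloc : HasStrictDerivAt ((hstrict u hus).localInverse f (deriv f u) u hdu)
        (deriv f u)⁻¹ (f u) := (hstrict u hus).to_localInverse hdu
    have hlocdef : (hstrict u hus).localInverse f (deriv f u) u hdu
        = ⇑(hFu.toOpenPartialHomeomorph f).symm := rfl
    have hgdiff : DifferentiableAt ℂ (⇑(hFu.toOpenPartialHomeomorph f).symm) v := by
      have := hloc.hasDerivAt.differentiableAt
      rw [hlocdef, hfu_eq] at this; exact this
    -- PH.symm agrees with the local inverse at u near v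
    have hcontat : ContinuousAt PH.symm v := by
      have : v ∈ PH.symm.source := by rw [OpenPartialHomeomorph.symm_source]; exact hv.1
      exact PH.symm.continuousAt this
    have husrc : u ∈ (hFu.toOpenPartialHomeomorph f).source :=
      hFu.mem_toOpenPartialHomeomorph_source
    have hev1 : ∀ᶠ x in 𝓝 v, x ∈ PH.target := PH.open_target.eventually_mem hv.1
    have hev2 : ∀ᶠ x in 𝓝 v, PH.symm x ∈ (hFu.toOpenPartialHomeomorph f).source := by
      apply hcontat.eventually_mem
      exact (hFu.toOpenPartialHomeomorph f).open_source.mem_nhds husrc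
    have hveq : ⇑PH.symm =ᶠ[𝓝 v] ⇑(hFu.toOpenPartialHomeomorph f).symm := by
      filter_upwards [hev1, hev2] with x hx1 hx2
      have hfx : f (PH.symm x) = x := by rw [← hcoe]; exact PH.right_inv hx1
      have hcoeu : ⇑(hFu.toOpenPartialHomeomorph f) = f := hFu.toOpenPartialHomeomorph_coe
      have := (hFu.toOpenPartialHomeomorph f).left_inv hx2
      rw [hcoeu, hfx] at this
      exact this.symm
    exact hveq.differentiableAt_iff.mpr hgdiff
  · -- injectivity on U
    intro u hu u' hu' hff
    have := PH.injOn
    apply this hu.1 hu'.1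
    rw [hcoe]; exact hff



/-! ### The square-root germ at 0 -/

def chi (m : ℂ) : ℂ := if m = 0 then 1 else 2 * phi m / m ^ 2

lemma chi_zero : chi 0 = 1 := by simp [chi]

lemma chi_near {m : ℂ} (hm : Complex.abs m ≤ 1) :
    Complex.abs (chi m - (1 - m / 3)) ≤ Complex.abs m ^ 2 := by
  rcases eq_or_ne m 0 with h | h
  · simp [h, chi]
  · have hsum : (∑ i ∈ Finset.range 4, (-m) ^ i / (i.factorial : ℂ))
        = 1 - m + m ^ 2 / 2 - m ^ 3 / 6 := by
      simp [Finset.sum_range_succ, Nat.factorial]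
      ring
    have hb := Complex.exp_bound (x := -m) (by simpa using hm) (by norm_num : 0 < 4)
    rw [hsum] at hb
    have hb' : Complex.abs (Complex.exp (-m) - (1 - m + m ^ 2 / 2 - m ^ 3 / 6))
        ≤ Complex.abs m ^ 4 / 2 := by
      have h5 : ((Nat.succ 4 : ℕ) : ℝ) * (((4).factorial * 4 : ℕ) : ℝ)⁻¹ ≤ 1 / 2 := by
        norm_num [Nat.factorial]
      calc Complex.abs (Complex.exp (-m) - (1 - m + m ^ 2 / 2 - m ^ 3 / 6))
          ≤ Complex.abs (-m) ^ 4 * (((4:ℕ).succ : ℝ) * (((4:ℕ).factorial * 4 : ℕ) : ℝ)⁻¹) := by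
            simpa using hb
        _ ≤ Complex.abs m ^ 4 * (1 / 2) := by
            rw [map_neg_eq_map]
            apply mul_le_mul_of_nonneg_left _ (by positivity)
            simpa using h5
        _ = Complex.abs m ^ 4 / 2 := by ring
    have key : chi m - (1 - m / 3)
        = 2 * (Complex.exp (-m) - (1 - m + m ^ 2 / 2 - m ^ 3 / 6)) / m ^ 2 := by
      rw [chi, if_neg h, phi]
      field_simp
      ring
    have hm0 : (0:ℝ) < Complex.abs m := Complex.abs.pos h
    rw [key]
    rw [map_div₀, map_mul]
    simp only [Complex.abs_two, map_pow]
    rw [div_le_iff₀ (by positivity)]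
    calc 2 * Complex.abs (Complex.exp (-m) - (1 - m + m ^ 2 / 2 - m ^ 3 / 6))
        ≤ 2 * (Complex.abs m ^ 4 / 2) := by linarith
      _ = Complex.abs m ^ 2 * Complex.abs m ^ 2 := by ring
      _ ≤ Complex.abs m ^ 2 * Complex.abs m ^ 2 := le_rfl
lemma hasDerivAt_chi0 : HasDerivAt chi (-(1/3) : ℂ) 0 := by
  rw [hasDerivAt_iff_isLittleO]
  have hshape : (fun m : ℂ => chi m - chi 0 - (m - 0) • (-(1/3) : ℂ))
      = fun m : ℂ => chi m - (1 - m / 3) := by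
    funext m
    simp [chi_zero, smul_eq_mul]
    ring
  rw [hshape]
  rw [Asymptotics.isLittleO_iff]
  intro c hc
  have hball : Metric.ball (0:ℂ) (min 1 c) ∈ 𝓝 (0:ℂ) :=
    Metric.ball_mem_nhds _ (lt_min one_pos hc)
  filter_upwards [hball] with m hmball
  have hmlt : Complex.abs m < min 1 c := by
    simpa [Complex.dist_eq] using hmball
  have h1 : Complex.abs m ≤ 1 := le_of_lt (lt_of_lt_of_le hmlt (min_le_left _ _))
  have h2 : Complex.abs m ≤ c := le_of_lt (lt_of_lt_of_le hmlt (min_le_right _ _))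
  have := chi_near h1
  have habs : ‖chi m - (1 - m / 3)‖ ≤ Complex.abs m ^ 2 := by
    simpa using this
  calc ‖chi m - (1 - m / 3)‖ ≤ Complex.abs m ^ 2 := habs
    _ = Complex.abs m * Complex.abs m := sq (Complex.abs m) ▸ by ring
    _ ≤ c * Complex.abs m := by
        apply mul_le_mul_of_nonneg_right h2 (Complex.abs.nonneg m)
    _ = c * ‖m - 0‖ := by simp

lemma diff_chi : Differentiable ℂ chi := by
  intro m
  rcases eq_or_ne m 0 with h | h
  · rw [h]; exact hasDerivAt_chi0.differentiableAt
  · have hev : chi =ᶠ[𝓝 m] fun w => 2 * phi w / w ^ 2 := by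
      filter_upwards [isOpen_compl_singleton.eventually_mem h] with w hw
      exact if_neg hw
    rw [hev.differentiableAt_iff]
    exact ((diff_phi m).const_mul 2).div (differentiableAt_pow 2) (pow_ne_zero 2 h)

def Wdom : Set ℂ := chi ⁻¹' Complex.slitPlane

lemma Wdom_open : IsOpen Wdom := Complex.isOpen_slitPlane.preimage diff_chi.continuous

lemma Wdom_mem0 : (0:ℂ) ∈ Wdom := by
  show chi 0 ∈ Complex.slitPlane
  rw [chi_zero]; exact Complex.one_mem_slitPlane

def cfun (m : ℂ) : ℂ := Complex.exp (Complex.log (chi m) / 2)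

def tau (m : ℂ) : ℂ := m * cfun m

lemma tau_zero : tau 0 = 0 := by simp [tau]

lemma diffAt_cfun {m : ℂ} (hm : m ∈ Wdom) : DifferentiableAt ℂ cfun m := by
  apply DifferentiableAt.cexp
  exact ((Complex.differentiableAt_log hm).comp m (diff_chi m)).div_const 2

lemma tau_diffOn : DifferentiableOn ℂ tau Wdom := by
  intro m hm
  exact (differentiableAt_id.mul (diffAt_cfun hm)).differentiableWithinAt

lemma hasDerivAt_tau0 : HasDerivAt tau 1 0 := by
  have hc : HasDerivAt cfun (deriv cfun 0) 0 := (diffAt_cfun Wdom_mem0).hasDerivAt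
  have := (hasDerivAt_id (0:ℂ)).mul hc
  have hc0 : cfun 0 = 1 := by simp [cfun, chi_zero, Complex.log_one]
  show HasDerivAt (fun m => m * cfun m) _ 0
  simpa [tau, hc0, Pi.mul_def] using this

lemma deriv_tau0 : deriv tau 0 = 1 := hasDerivAt_tau0.deriv

lemma tau_sq {m : ℂ} (hm : m ∈ Wdom) : tau m ^ 2 = 2 * phi m := by
  have hχ : chi m ≠ 0 := Complex.slitPlane_ne_zero hm
  have h1 : tau m ^ 2 = m ^ 2 * chi m := by
    show (m * cfun m) ^ 2 = m ^ 2 * chi m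
    rw [mul_pow]
    congr 1
    show Complex.exp (Complex.log (chi m) / 2) ^ 2 = chi m
    rw [sq, ← Complex.exp_add]
    rw [show Complex.log (chi m) / 2 + Complex.log (chi m) / 2 = Complex.log (chi m) by ring]
    exact Complex.exp_log hχ
  rcases eq_or_ne m 0 with h | h
  · rw [h] at h1 ⊢
    simpa [phi] using h1
  · rw [h1, chi, if_neg h]
    field_simp

def Ldat : LocInv tau Wdom 0 :=
  (exists_locInv Wdom_open tau_diffOn Wdom_mem0
    (by rw [deriv_tau0]; exact one_ne_zero)).some

def G : ℂ → ℂ := Ldat.g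

lemma tau0_memV : (0:ℂ) ∈ Ldat.V := by
  have := Ldat.memV
  rwa [tau_zero] at this

lemma G_zero : G 0 = 0 := by
  have := (Ldat.mapsU 0 Ldat.memU).2
  rwa [tau_zero] at this

lemma G_diffAt0 : DifferentiableAt ℂ G 0 :=
  Ldat.diffg.differentiableAt (Ldat.openV.mem_nhds tau0_memV)

lemma deriv_G0 : deriv G 0 = 1 := by
  have hGd : HasDerivAt G (deriv G 0) 0 := G_diffAt0.hasDerivAt
  have htau : HasDerivAt tau 1 (G 0) := by rw [G_zero]; exact hasDerivAt_tau0
  have hcomp : HasDerivAt (fun v => tau (G v)) (1 * deriv G 0) 0 := htau.comp 0 hGd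
  have hev : (fun v => tau (G v)) =ᶠ[𝓝 (0:ℂ)] id := by
    filter_upwards [Ldat.openV.mem_nhds tau0_memV] with v hv
    exact (Ldat.mapsV v hv).2
  have hid : HasDerivAt (id : ℂ → ℂ) (1 * deriv G 0) 0 :=
    hcomp.congr_of_eventuallyEq hev.symm
  have h := (hasDerivAt_id (0:ℂ)).unique hid
  rw [one_mul] at h
  exact h.symm


/-! ### Solutions of `phi (m z) = z^2/2` on balls -/

def RR : ℝ := 2 * Real.sqrt Real.pi

lemma RR_pos : 0 < RR := by
  have := Real.sqrt_pos.mpr Real.pi_pos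
  unfold RR; linarith

lemma RR_sq : RR ^ 2 = 4 * Real.pi := by
  unfold RR
  rw [mul_pow, Real.sq_sqrt Real.pi_pos.le]
  ring

def Sol (r : ℝ) (m : ℂ → ℂ) : Prop :=
  DifferentiableOn ℂ m (ball (0:ℂ) r) ∧ m 0 = 0 ∧ deriv m 0 = 1 ∧
    ∀ z ∈ ball (0:ℂ) r, phi (m z) = z ^ 2 / 2

lemma sol_mono {r s : ℝ} {m : ℂ → ℂ} (h : Sol r m) (hs : s ≤ r) : Sol s m :=
  ⟨h.1.mono (ball_subset_ball hs), h.2.1, h.2.2.1,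
    fun z hz => h.2.2.2 z (ball_subset_ball hs hz)⟩

lemma sol_germ : ∃ r, 0 < r ∧ r ≤ RR ∧ Sol r G := by
  obtain ⟨ε, hε, hsub⟩ := Metric.isOpen_iff.mp Ldat.openV 0 tau0_memV
  refine ⟨min ε RR, lt_min hε RR_pos, min_le_right _ _, ?_, G_zero, deriv_G0, ?_⟩
  · exact Ldat.diffg.mono ((ball_subset_ball (min_le_left _ _)).trans hsub)
  · intro z hz
    have hzV : z ∈ Ldat.V := hsub (ball_subset_ball (min_le_left _ _) hz)
    obtain ⟨hU, hτ⟩ := Ldat.mapsV z hzV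
    have := tau_sq (Ldat.subU hU)
    rw [hτ] at this
    rw [eq_div_iff (two_ne_zero)]
    show phi (Ldat.g z) * 2 = z ^ 2
    linear_combination -this

lemma sol_eventually_g {r : ℝ} {m : ℂ → ℂ} (hr : 0 < r) (hm : Sol r m) :
    m =ᶠ[𝓝 0] G := by
  have h0ball : (0:ℂ) ∈ ball (0:ℂ) r := mem_ball_self hr
  have hmd : DifferentiableAt ℂ m 0 := hm.1.differentiableAt (isOpen_ball.mem_nhds h0ball)
  have hcont : ContinuousAt m 0 := hmd.continuousAt
  have hm0 : m 0 = 0 := hm.2.1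
  have ev_mU : ∀ᶠ z in 𝓝 (0:ℂ), m z ∈ Ldat.U := by
    apply hcont.eventually_mem
    rw [hm0]
    exact Ldat.openU.mem_nhds Ldat.memU
  have ev_ball : ∀ᶠ z in 𝓝 (0:ℂ), z ∈ ball (0:ℂ) r := isOpen_ball.eventually_mem h0ball
  have hm1 : HasDerivAt m 1 0 := by
    have := hmd.hasDerivAt; rwa [hm.2.2.1] at this
  have htau : HasDerivAt tau 1 (m 0) := by rw [hm0]; exact hasDerivAt_tau0
  have hh : HasDerivAt (fun z => tau (m z)) 1 0 := by
    have := htau.comp 0 hm1; simpa [Function.comp_def] using this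
  have hsub : HasDerivAt (fun z => tau (m z) - z) 0 0 := by
    have := hh.sub (hasDerivAt_id 0); simpa [Pi.sub_def] using this
  have hlittle : (fun z : ℂ => tau (m z) - z) =o[𝓝 0] fun z : ℂ => z := by
    rw [hasDerivAt_iff_isLittleO] at hsub
    simpa [hm0, tau_zero] using hsub
  have hev_le : ∀ᶠ z in 𝓝 (0:ℂ), ‖tau (m z) - z‖ ≤ 1 * ‖z‖ :=
    Asymptotics.isLittleO_iff.mp hlittle one_pos
  have hsq : ∀ᶠ z in 𝓝 (0:ℂ), tau (m z) ^ 2 = z ^ 2 := by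
    filter_upwards [ev_mU, ev_ball] with z h1 h2
    have := tau_sq (Ldat.subU h1)
    rw [hm.2.2.2 z h2] at this
    rw [this]; ring
  filter_upwards [hsq, hev_le, ev_mU] with z h1 h2 h3
  have hz : tau (m z) = z := by
    have hfac : (tau (m z) - z) * (tau (m z) + z) = 0 := by linear_combination h1
    rcases mul_eq_zero.mp hfac with h | h
    · exact sub_eq_zero.mp h
    · have hmz : tau (m z) = -z := by linear_combination h
      rw [hmz] at h2
      have hnn : ‖-z - z‖ = 2 * ‖z‖ := by
        rw [show -z - z = -(2 * z) by ring, norm_neg, norm_mul]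
        norm_num
      rw [hnn] at h2
      have hz0 : ‖z‖ = 0 := by linarith [norm_nonneg z]
      have hz00 : z = 0 := norm_eq_zero.mp hz0
      rw [hmz, hz00, neg_zero]
  calc m z = G (tau (m z)) := ((Ldat.mapsU _ h3).2).symm
    _ = G z := by rw [hz]

lemma sol_uniq {r : ℝ} {m₁ m₂ : ℂ → ℂ} (hr : 0 < r) (h1 : Sol r m₁) (h2 : Sol r m₂) :
    EqOn m₁ m₂ (ball (0:ℂ) r) := by
  have h12 : m₁ =ᶠ[𝓝 0] m₂ :=
    (sol_eventually_g hr h1).trans (sol_eventually_g hr h2).symm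
  exact (h1.1.analyticOnNhd isOpen_ball).eqOn_of_preconnected_of_eventuallyEq
    (h2.1.analyticOnNhd isOpen_ball) (convex_ball (0:ℂ) r).isPreconnected
    (mem_ball_self hr) h12


/-! ### A priori bounds -/

lemma phi_im (w : ℂ) : (phi w).im = w.im - Real.exp (-w.re) * Real.sin w.im := by
  simp [phi, Complex.add_im, Complex.sub_im, Complex.one_im, Complex.exp_im,
    Complex.neg_re, Complex.neg_im, Real.sin_neg]
  ring

lemma sin3pi : Real.sin (3 * Real.pi) = 0 := by
  have := Real.sin_int_mul_pi 3
  push_cast at this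
  convert this using 2

lemma half_sq_bounds {z : ℂ} {r : ℝ} (hz : z ∈ ball (0:ℂ) r) (hr : r ≤ RR) :
    Complex.abs (z ^ 2 / 2) < 2 * Real.pi := by
  have h1 : Complex.abs z < RR := by
    have : dist z 0 < r := hz
    rw [Complex.dist_eq, sub_zero] at this
    linarith
  have h2 : Complex.abs z ^ 2 < RR ^ 2 :=
    pow_lt_pow_left₀ h1 (Complex.abs.nonneg z) two_ne_zero
  rw [RR_sq] at h2
  rw [map_div₀, map_pow, Complex.abs_two]
  linarith

lemma sol_im_lt {r : ℝ} {m : ℂ → ℂ} (hr : r ≤ RR) (hm : Sol r m) :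
    ∀ z ∈ ball (0:ℂ) r, |(m z).im| < 3 * Real.pi := by
  intro z hz
  have rpos : 0 < r := by
    have : dist z 0 < r := hz
    linarith [dist_nonneg (x := z) (y := (0:ℂ))]
  have hponly : ∀ x ∈ ball (0:ℂ) r, |(m x).im| ≠ 3 * Real.pi := by
    intro x hx heq
    have h2 := hm.2.2.2 x hx
    have hsin : Real.sin ((m x).im) = 0 := by
      rcases (abs_eq (by positivity : (0:ℝ) ≤ 3 * Real.pi)).mp heq with h | h
      · rw [h]; exact sin3pi
      · rw [h, Real.sin_neg, sin3pi, neg_zero]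
    have him : (phi (m x)).im = (m x).im := by
      rw [phi_im, hsin]; ring
    rw [h2] at him
    have habs : |(x ^ 2 / 2).im| < 2 * Real.pi :=
      lt_of_le_of_lt (Complex.abs_im_le_abs _) (half_sq_bounds hx hr)
    rw [him, heq] at habs
    linarith [Real.pi_pos]
  set A : Set ℂ := ball (0:ℂ) r ∩ m ⁻¹' {w : ℂ | |w.im| < 3 * Real.pi} with hA
  set B : Set ℂ := ball (0:ℂ) r ∩ m ⁻¹' {w : ℂ | 3 * Real.pi < |w.im|} with hB
  have hopA : IsOpen A := hm.1.continuousOn.isOpen_inter_preimage isOpen_ball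
    (isOpen_lt (continuous_abs.comp Complex.continuous_im) continuous_const)
  have hopB : IsOpen B := hm.1.continuousOn.isOpen_inter_preimage isOpen_ball
    (isOpen_lt continuous_const (continuous_abs.comp Complex.continuous_im))
  have hcover : ball (0:ℂ) r ⊆ A ∪ B := by
    intro x hx
    rcases lt_trichotomy (|(m x).im|) (3 * Real.pi) with h | h | h
    · exact Or.inl ⟨hx, h⟩
    · exact absurd h (hponly x hx)
    · exact Or.inr ⟨hx, h⟩
  have hdisj : Disjoint A B := by
    rw [Set.disjoint_left]
    rintro x ⟨-, h1⟩ ⟨-, h2⟩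
    have h1' : |(m x).im| < 3 * Real.pi := h1
    have h2' : 3 * Real.pi < |(m x).im| := h2
    linarith
  have hne : (ball (0:ℂ) r ∩ A).Nonempty := by
    refine ⟨0, mem_ball_self rpos, mem_ball_self rpos, ?_⟩
    show |(m 0).im| < 3 * Real.pi
    rw [hm.2.1]
    simpa using by positivity
  have hsub := (convex_ball (0:ℂ) r).isPreconnected.subset_left_of_subset_union
    hopA hopB hdisj hcover hne
  exact (hsub hz).2

lemma abs_le_of_phi {w : ℂ} (him : |w.im| ≤ 3 * Real.pi)
    (habs : Complex.abs (phi w) ≤ 2 * Real.pi) : Complex.abs w ≤ 30 := by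
  have hsum : Complex.abs w ≤ |w.re| + |w.im| := Complex.abs_le_abs_re_add_abs_im w
  have hpi : Real.pi < 3.15 := Real.pi_lt_d2
  have hpi3 : 3 < Real.pi := Real.pi_gt_three
  rcases le_or_gt 0 w.re with h | h
  · have hexp : Complex.abs (Complex.exp (-w)) ≤ 1 := by
      rw [Complex.abs_exp]
      apply Real.exp_le_one_iff.mpr
      simpa using h
    have h1 : Complex.abs w = Complex.abs (phi w + 1 - Complex.exp (-w)) := by
      congr 1; rw [phi]; ring
    have h2 : Complex.abs (phi w + 1 - Complex.exp (-w))
        ≤ Complex.abs (phi w + 1) + Complex.abs (Complex.exp (-w)) := by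
      rw [sub_eq_add_neg]
      refine le_trans (Complex.abs.add_le _ _) ?_
      rw [map_neg_eq_map]
    have h3 : Complex.abs (phi w + 1) ≤ Complex.abs (phi w) + 1 := by
      simpa using Complex.abs.add_le (phi w) 1
    linarith
  · set t : ℝ := -w.re with ht
    have ht0 : 0 < t := by simp only [ht]; linarith
    have habs_w : Complex.abs w ≤ t + 3 * Real.pi := by
      have hre : |w.re| = t := abs_of_neg h
      linarith
    have hexp_eq : Complex.abs (Complex.exp (-w)) = Real.exp t := by
      rw [Complex.abs_exp]
      congr 1
    have hexp_le : Real.exp t ≤ Complex.abs (phi w) + Complex.abs w + 1 := by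
      have hrw : Complex.exp (-w) = phi w - w + 1 := by rw [phi]; ring
      rw [← hexp_eq, hrw]
      calc Complex.abs (phi w - w + 1) ≤ Complex.abs (phi w - w) + 1 := by
            simpa using Complex.abs.add_le (phi w - w) 1
        _ ≤ Complex.abs (phi w) + Complex.abs w + 1 := by
            have : ‖phi w - w‖ ≤ ‖phi w‖ + ‖w‖ := norm_sub_le _ _
            simp only [Complex.norm_eq_abs] at this
            linarith
    have hE : Real.exp t ≤ t + 5 * Real.pi + 1 := by linarith
    have ht10 : t ≤ 10 := by
      by_contra hgt
      push_neg at hgt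
      have h1 : t / 2 + 1 ≤ Real.exp (t / 2) := Real.add_one_le_exp (t / 2)
      have h2 : (t / 2 + 1) ^ 2 ≤ Real.exp (t / 2) ^ 2 :=
        pow_le_pow_left₀ (by linarith) h1 2
      have h3 : Real.exp (t / 2) ^ 2 = Real.exp t := by
        rw [sq, ← Real.exp_add]
        norm_num
      nlinarith
    calc Complex.abs w ≤ t + 3 * Real.pi := habs_w
      _ ≤ 10 + 3 * 3.15 := by linarith
      _ ≤ 30 := by norm_num

lemma sol_abs_le {r : ℝ} {m : ℂ → ℂ} (hr : r ≤ RR) (hm : Sol r m) :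
    ∀ z ∈ ball (0:ℂ) r, Complex.abs (m z) ≤ 30 := by
  intro z hz
  apply abs_le_of_phi (le_of_lt (sol_im_lt hr hm z hz))
  rw [hm.2.2.2 z hz]
  exact le_of_lt (half_sq_bounds hz hr)

lemma one_sub_exp_ne {w ζ : ℂ} (heq : phi w = ζ ^ 2 / 2)
    (habs : Complex.abs ζ ^ 2 < 4 * Real.pi) (hζ : ζ ≠ 0) :
    1 - Complex.exp (-w) ≠ 0 := by
  intro hcontra
  have hexp1 : Complex.exp (-w) = 1 := by linear_combination -hcontra
  obtain ⟨n, hn⟩ := Complex.exp_eq_one_iff.mp hexp1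
  have hw : w = -((n : ℂ) * (2 * (Real.pi : ℂ) * Complex.I)) := by
    linear_combination -hn
  have habsw : Complex.abs w = |(n : ℝ)| * (2 * Real.pi) := by
    rw [hw, map_neg_eq_map, map_mul, map_mul, map_mul]
    rw [Complex.abs_intCast, Complex.abs_two, Complex.abs_ofReal, Complex.abs_I]
    rw [abs_of_pos Real.pi_pos]
    ring
  have hphiw : phi w = w := by rw [phi, hexp1]; ring
  have hwval : ζ ^ 2 / 2 = w := by rw [← heq, hphiw]
  have habs2 : Complex.abs ζ ^ 2 / 2 = Complex.abs w := by
    rw [← hwval, map_div₀, map_pow, Complex.abs_two]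
  rcases eq_or_ne n 0 with h0 | h0
  · rw [h0] at habsw
    simp only [Int.cast_zero, abs_zero, zero_mul] at habsw
    rw [habsw] at habs2
    have : Complex.abs ζ = 0 := by
      have h1 : Complex.abs ζ ^ 2 = 0 := by linarith
      nlinarith [Complex.abs.nonneg ζ]
    exact hζ (Complex.abs.eq_zero.mp this)
  · have h1 : (1 : ℝ) ≤ |(n : ℝ)| := by
      have := Int.one_le_abs h0
      calc (1:ℝ) ≤ (|n| : ℤ) := by exact_mod_cast this
        _ = |(n : ℝ)| := by push_cast; rfl
    have : 2 * Real.pi ≤ Complex.abs w := by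
      rw [habsw]
      nlinarith [Real.pi_pos]
    rw [← habs2] at this
    linarith


lemma mem_ball_zero' {z : ℂ} {r : ℝ} : z ∈ ball (0:ℂ) r ↔ Complex.abs z < r := by
  rw [mem_ball, Complex.dist_eq, sub_zero]

def P (r : ℝ) : Prop := ∃ m, Sol r m

lemma P_limit {r : ℝ} (hr : 0 < r) (H : ∀ s, 0 < s → s < r → P s) : P r := by
  classical
  set M : ℝ → (ℂ → ℂ) := fun s => if h : 0 < s ∧ s < r then (H s h.1 h.2).choose else 0
    with hMdef
  have hM : ∀ s, 0 < s → s < r → Sol s (M s) := by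
    intro s h1 h2
    have : M s = (H s h1 h2).choose := by
      rw [hMdef]; simp only [dif_pos (And.intro h1 h2)]
    rw [this]
    exact (H s h1 h2).choose_spec
  set m : ℂ → ℂ := fun z => M ((Complex.abs z + r) / 2) z with hmdef
  have haux : ∀ z : ℂ, Complex.abs z < r →
      0 < (Complex.abs z + r) / 2 ∧ (Complex.abs z + r) / 2 < r ∧
        Complex.abs z < (Complex.abs z + r) / 2 := by
    intro z hz
    have h0 := Complex.abs.nonneg z
    exact ⟨by linarith, by linarith, by linarith⟩
  have hkey : ∀ s, 0 < s → s < r → ∀ z ∈ ball (0:ℂ) s, m z = M s z := by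
    intro s h1 h2 z hz
    have hzs : Complex.abs z < s := mem_ball_zero'.mp hz
    have hzr : Complex.abs z < r := lt_trans hzs h2
    obtain ⟨h1', h2', hzs'⟩ := haux z hzr
    have hmin : 0 < min s ((Complex.abs z + r) / 2) := lt_min h1 h1'
    have e := sol_uniq hmin (sol_mono (hM s h1 h2) (min_le_left _ _))
      (sol_mono (hM _ h1' h2') (min_le_right _ _))
    have hzmem : z ∈ ball (0:ℂ) (min s ((Complex.abs z + r) / 2)) :=
      mem_ball_zero'.mpr (lt_min hzs hzs')
    exact (e hzmem).symm
  have hm_ev : ∀ z : ℂ, Complex.abs z < r →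
      m =ᶠ[𝓝 z] M ((Complex.abs z + r) / 2) := by
    intro z hzr
    obtain ⟨h1', h2', hzs'⟩ := haux z hzr
    filter_upwards [isOpen_ball.eventually_mem (mem_ball_zero'.mpr hzs')] with x hx
    exact hkey _ h1' h2' x hx
  have hr2 : (0:ℝ) < r / 2 := by linarith
  have hr2' : r / 2 < r := by linarith
  have h0mem : (0:ℂ) ∈ ball (0:ℂ) (r/2) := mem_ball_zero'.mpr (by simpa using hr2)
  refine ⟨m, ?_, ?_, ?_, ?_⟩
  · intro z hz
    apply DifferentiableAt.differentiableWithinAt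
    have hzr : Complex.abs z < r := mem_ball_zero'.mp hz
    obtain ⟨h1', h2', hzs'⟩ := haux z hzr
    rw [(hm_ev z hzr).differentiableAt_iff]
    exact (hM _ h1' h2').1.differentiableAt (isOpen_ball.mem_nhds (mem_ball_zero'.mpr hzs'))
  · rw [hkey (r/2) hr2 hr2' 0 h0mem]
    exact (hM _ hr2 hr2').2.1
  · have hev : m =ᶠ[𝓝 0] M ((Complex.abs 0 + r) / 2) := hm_ev 0 (by simpa using hr)
    rw [hev.deriv_eq]
    have h1' : (0:ℝ) < (Complex.abs 0 + r) / 2 := by simpa using hr2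
    have h2' : (Complex.abs 0 + r) / 2 < r := by simpa using hr2'
    exact (hM _ h1' h2').2.2.1
  · intro z hz
    have hzr : Complex.abs z < r := mem_ball_zero'.mp hz
    obtain ⟨h1', h2', hzs'⟩ := haux z hzr
    rw [hkey _ h1' h2' z (mem_ball_zero'.mpr hzs')]
    exact (hM _ h1' h2').2.2.2 z (mem_ball_zero'.mpr hzs')

lemma patch {r : ℝ} {m : ℂ → ℂ} (h0 : 0 < r) (hR : r < RR) (hm : Sol r m)
    {ζ : ℂ} (hζ : Complex.abs ζ = r) :
    ∃ δ, 0 < δ ∧ ∃ mp : ℂ → ℂ, DifferentiableOn ℂ mp (ball ζ δ) ∧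
      (∀ z ∈ ball ζ δ, phi (mp z) = z ^ 2 / 2) ∧
      EqOn m mp (ball ζ δ ∩ ball (0:ℂ) r) := by
  have hζ0 : ζ ≠ 0 := by
    intro h; rw [h] at hζ; simp at hζ; linarith
  set seq : ℕ → ℂ := fun n => ((1 - 1/(n+1) : ℝ)) • ζ with hseqdef
  have hcoef : ∀ n : ℕ, (0:ℝ) ≤ 1 - 1/(n+1) ∧ (1 - 1/(n+1) : ℝ) < 1 := by
    intro n
    have h1 : (0:ℝ) < 1/(n+1) := by positivity
    have h2 : (1:ℝ)/(n+1) ≤ 1 := by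
      rw [div_le_one (by positivity)]
      linarith [Nat.cast_nonneg (α := ℝ) n]
    exact ⟨by linarith, by linarith⟩
  have habs_seq : ∀ n, Complex.abs (seq n) = (1 - 1/(n+1) : ℝ) * r := by
    intro n
    rw [hseqdef]
    simp only [Complex.real_smul, map_mul, Complex.abs_ofReal]
    rw [_root_.abs_of_nonneg (hcoef n).1, hζ]
  have hseq_mem : ∀ n, seq n ∈ ball (0:ℂ) r := by
    intro n
    rw [mem_ball_zero', habs_seq]
    nlinarith [(hcoef n).1, (hcoef n).2, h0]
  have hseq_tend : Tendsto seq atTop (𝓝 ζ) := by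
    have h1 : Tendsto (fun n : ℕ => (1 - 1/(n+1) : ℝ)) atTop (𝓝 1) := by
      have h2 := tendsto_one_div_add_atTop_nhds_zero_nat (𝕜 := ℝ)
      simpa using (tendsto_const_nhds (x := (1:ℝ)) (f := atTop)).sub h2
    have h3 := h1.smul_const ζ
    rw [one_smul] at h3
    exact h3
  have hbdd : ∀ n, m (seq n) ∈ closedBall (0:ℂ) 30 := by
    intro n
    rw [mem_closedBall, Complex.dist_eq, sub_zero]
    exact sol_abs_le (le_of_lt hR) hm _ (hseq_mem n)
  obtain ⟨w, hwmem, σ, hσmono, hσtend⟩ :=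
    (isCompact_closedBall (0:ℂ) 30).tendsto_subseq hbdd
  have hseqσ : Tendsto (fun n => seq (σ n)) atTop (𝓝 ζ) :=
    hseq_tend.comp hσmono.tendsto_atTop
  have hms_tend : Tendsto (fun n => m (seq (σ n))) atTop (𝓝 w) := hσtend
  have hval : (fun n => phi (m (seq (σ n)))) = fun n => (seq (σ n)) ^ 2 / 2 :=
    funext fun n => hm.2.2.2 _ (hseq_mem _)
  have hphi_tend : Tendsto (fun n => phi (m (seq (σ n)))) atTop (𝓝 (phi w)) :=
    (cont_phi.tendsto w).comp hms_tend
  have hsq_tend : Tendsto (fun n => (seq (σ n)) ^ 2 / 2) atTop (𝓝 (ζ ^ 2 / 2)) :=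
    (hseqσ.pow 2).div_const 2
  have hphiw : phi w = ζ ^ 2 / 2 := by
    rw [hval] at hphi_tend
    exact tendsto_nhds_unique hphi_tend hsq_tend
  have hder : deriv phi w ≠ 0 := by
    rw [(hasDerivAt_phi w).deriv]
    apply one_sub_exp_ne hphiw _ hζ0
    rw [hζ, ← RR_sq]
    exact pow_lt_pow_left₀ hR h0.le two_ne_zero
  obtain ⟨L⟩ := exists_locInv isOpen_univ diff_phi.differentiableOn (mem_univ w) hder
  have hVmem : ζ ^ 2 / 2 ∈ L.V := by rw [← hphiw]; exact L.memV
  have hcontq : Continuous (fun z : ℂ => z ^ 2 / 2) := by continuity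
  have hpre : IsOpen ((fun z : ℂ => z ^ 2 / 2) ⁻¹' L.V) := L.openV.preimage hcontq
  have hζpre : ζ ∈ (fun z : ℂ => z ^ 2 / 2) ⁻¹' L.V := hVmem
  obtain ⟨δ, hδ0, hδsub⟩ := Metric.isOpen_iff.mp hpre ζ hζpre
  have hdiffmp : ∀ z ∈ ball ζ δ, DifferentiableAt ℂ (fun z : ℂ => L.g (z ^ 2 / 2)) z := by
    intro z hz
    exact (L.diffg.differentiableAt (L.openV.mem_nhds (hδsub hz))).comp z
      ((differentiableAt_pow 2).div_const 2)
  refine ⟨δ, hδ0, fun z => L.g (z ^ 2 / 2), ?_, ?_, ?_⟩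
  · intro z hz
    exact (hdiffmp z hz).differentiableWithinAt
  · intro z hz
    exact (L.mapsV _ (hδsub hz)).2
  · set O := ball ζ δ ∩ ball (0:ℂ) r with hO
    have hOopen : IsOpen O := isOpen_ball.inter isOpen_ball
    have hOpre : IsPreconnected O :=
      ((convex_ball ζ δ).inter (convex_ball 0 r)).isPreconnected
    have hg_cont : ContinuousAt L.g (ζ ^ 2 / 2) :=
      (L.diffg.differentiableAt (L.openV.mem_nhds hVmem)).continuousAt
    have hgw : L.g (ζ ^ 2 / 2) = w := by rw [← hphiw]; exact (L.mapsU w L.memU).2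
    have hmp_tend : Tendsto (fun n => L.g ((seq (σ n)) ^ 2 / 2)) atTop (𝓝 w) := by
      have := hg_cont.tendsto.comp hsq_tend
      rwa [hgw] at this
    have hev1 : ∀ᶠ n in atTop, m (seq (σ n)) ∈ L.U :=
      hms_tend.eventually (L.openU.eventually_mem L.memU)
    have hev2 : ∀ᶠ n in atTop, L.g ((seq (σ n)) ^ 2 / 2) ∈ L.U :=
      hmp_tend.eventually (L.openU.eventually_mem L.memU)
    have hev3 : ∀ᶠ n in atTop, seq (σ n) ∈ ball ζ δ :=
      hseqσ.eventually (isOpen_ball.eventually_mem (mem_ball_self hδ0))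
    obtain ⟨N, hN1, hN2, hN3⟩ := ((hev1.and (hev2.and hev3)).exists : ∃ N, _)
    obtain ⟨hN1, hN2, hN3⟩ := (⟨hN1, hN2, hN3⟩ : _ ∧ _ ∧ _)
    have hz₀O : seq (σ N) ∈ O := ⟨hN3, hseq_mem _⟩
    have hev_eq : m =ᶠ[𝓝 (seq (σ N))] fun z => L.g (z ^ 2 / 2) := by
      have hc_m : ContinuousAt m (seq (σ N)) :=
        (hm.1.differentiableAt (isOpen_ball.mem_nhds (hseq_mem (σ N)))).continuousAt
      have hc_mp : ContinuousAt (fun z : ℂ => L.g (z ^ 2 / 2)) (seq (σ N)) :=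
        (hdiffmp _ hN3).continuousAt
      have hev_mU : ∀ᶠ z in 𝓝 (seq (σ N)), m z ∈ L.U :=
        hc_m.eventually_mem (L.openU.mem_nhds hN1)
      have hev_mpU : ∀ᶠ z in 𝓝 (seq (σ N)), L.g (z ^ 2 / 2) ∈ L.U :=
        hc_mp.eventually_mem (L.openU.mem_nhds hN2)
      have hev_ball : ∀ᶠ z in 𝓝 (seq (σ N)), z ∈ ball (0:ℂ) r :=
        isOpen_ball.eventually_mem (hseq_mem (σ N))
      have hev_ballζ : ∀ᶠ z in 𝓝 (seq (σ N)), z ∈ ball ζ δ :=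
        isOpen_ball.eventually_mem hN3
      filter_upwards [hev_mU, hev_mpU, hev_ball, hev_ballζ] with z h1 h2 h3 h4
      apply L.inj _ h1 _ h2
      rw [hm.2.2.2 z h3, (L.mapsV _ (hδsub h4)).2]
    have ham : AnalyticOnNhd ℂ m O := (hm.1.mono inter_subset_right).analyticOnNhd hOopen
    have hamp : AnalyticOnNhd ℂ (fun z => L.g (z ^ 2 / 2)) O := by
      apply DifferentiableOn.analyticOnNhd _ hOopen
      intro z hz
      exact (hdiffmp z hz.1).differentiableWithinAt
    exact ham.eqOn_of_preconnected_of_eventuallyEq hamp hOpre hz₀O hev_eq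


lemma extend {r : ℝ} (h0 : 0 < r) (hR : r < RR) (hP : P r) :
    ∃ r', r < r' ∧ r' ≤ RR ∧ P r' := by
  classical
  obtain ⟨m, hm⟩ := hP
  have Hpatch := fun (ζ : ℂ) (hζ : Complex.abs ζ = r) => patch h0 hR hm hζ
  choose! δf δpos mpf hdiff heq hEqOn using Hpatch
  have hsphere_abs : ∀ z : ℂ, z ∈ Metric.sphere (0:ℂ) r ↔ Complex.abs z = r := by
    intro z; rw [mem_sphere, Complex.dist_eq, sub_zero]
  have hcover : Metric.sphere (0:ℂ) r ⊆ ⋃ ζ ∈ Metric.sphere (0:ℂ) r, ball ζ (δf ζ / 6) := by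
    intro ζ hζ
    exact mem_biUnion hζ (mem_ball_self (by linarith [δpos ζ ((hsphere_abs ζ).mp hζ)]))
  obtain ⟨t, htsub, htfin, htcover⟩ := (isCompact_sphere (0:ℂ) r).elim_finite_subcover_image
    (fun ζ _ => isOpen_ball) hcover
  have htabs : ∀ ζ ∈ t, Complex.abs ζ = r := fun ζ hζ => (hsphere_abs ζ).mp (htsub hζ)
  have htne : t.Nonempty := by
    have hrmem : (r:ℂ) ∈ Metric.sphere (0:ℂ) r := by
      rw [hsphere_abs, Complex.abs_ofReal]; exact _root_.abs_of_pos h0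
    rcases mem_iUnion₂.mp (htcover hrmem) with ⟨ζ, hζ, -⟩
    exact ⟨ζ, hζ⟩
  have hFne : htfin.toFinset.Nonempty := by
    rwa [Set.Finite.toFinset_nonempty]
  set ε₁ : ℝ := htfin.toFinset.inf' hFne (fun ζ => δf ζ / 6) with hε₁
  have hε₁pos : 0 < ε₁ := by
    rw [hε₁, Finset.lt_inf'_iff]
    intro ζ hζF
    have hζt : ζ ∈ t := (Set.Finite.mem_toFinset htfin).mp hζF
    linarith [δpos ζ (htabs ζ hζt)]
  have hε₁le : ∀ ζ ∈ t, ε₁ ≤ δf ζ / 6 := fun ζ hζ =>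
    Finset.inf'_le _ ((Set.Finite.mem_toFinset htfin).mpr hζ)
  set ε : ℝ := min ε₁ (min ((RR - r)/2) (r/2)) with hε
  have hεpos : 0 < ε := lt_min hε₁pos (lt_min (by linarith) (by linarith))
  have hεle : ∀ ζ ∈ t, ε ≤ δf ζ / 6 := fun ζ h => le_trans (min_le_left _ _) (hε₁le ζ h)
  have hεr2 : ε ≤ r/2 := le_trans (min_le_right _ _) (min_le_right _ _)
  have hεR : ε ≤ (RR - r)/2 := le_trans (min_le_right _ _) (min_le_left _ _)
  have hindex : ∀ z : ℂ, r ≤ Complex.abs z → Complex.abs z < r + ε →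
      ∃ ζ ∈ t, dist z ζ < δf ζ / 2 := by
    intro z hz1 hz2
    have hz0 : (0:ℝ) < Complex.abs z := by linarith
    set p : ℂ := ((r / Complex.abs z : ℝ)) • z with hp
    have hpabs : Complex.abs p = r := by
      rw [hp, Complex.real_smul, map_mul, Complex.abs_ofReal,
        _root_.abs_of_nonneg (by positivity)]
      field_simp
    have hpmem : p ∈ Metric.sphere (0:ℂ) r := (hsphere_abs p).mpr hpabs
    rcases mem_iUnion₂.mp (htcover hpmem) with ⟨ζ, hζt, hζball⟩
    have hdzp : dist z p = Complex.abs z - r := by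
      rw [hp, Complex.dist_eq]
      have hzz : z - ((r / Complex.abs z : ℝ) : ℂ) * z = ((1 - r/Complex.abs z : ℝ) : ℂ) * z := by
        push_cast; ring
      rw [Complex.real_smul, hzz, map_mul, Complex.abs_ofReal]
      rw [_root_.abs_of_nonneg (by rw [sub_nonneg, div_le_one hz0]; exact hz1)]
      field_simp
    refine ⟨ζ, hζt, ?_⟩
    have h1 : dist p ζ < δf ζ / 6 := by simpa [mem_ball] using hζball
    have h2 : dist z p < ε := by rw [hdzp]; linarith
    calc dist z ζ ≤ dist z p + dist p ζ := dist_triangle _ _ _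
      _ < ε + δf ζ/6 := by linarith
      _ ≤ δf ζ/6 + δf ζ/6 := by linarith [hεle ζ hζt]
      _ < δf ζ/2 := by linarith [δpos ζ (htabs ζ hζt)]
  have hcompat : ∀ ζ₁ ∈ t, ∀ ζ₂ ∈ t, ∀ z : ℂ, dist z ζ₁ < δf ζ₁ / 2 →
      dist z ζ₂ < δf ζ₂ / 2 → Complex.abs z < r + ε → mpf ζ₁ z = mpf ζ₂ z := by
    intro ζ₁ h₁ ζ₂ h₂ z hd₁ hd₂ hz
    have habs₁ := htabs ζ₁ h₁
    have habs₂ := htabs ζ₂ h₂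
    have hδ₁ := δpos ζ₁ habs₁
    have hδ₂ := δpos ζ₂ habs₂
    rcases lt_or_ge (Complex.abs z) r with hlt | hge
    · rw [← hEqOn ζ₁ habs₁ ⟨mem_ball.mpr (by linarith), mem_ball_zero'.mpr hlt⟩,
        ← hEqOn ζ₂ habs₂ ⟨mem_ball.mpr (by linarith), mem_ball_zero'.mpr hlt⟩]
    · have hz0 : (0:ℝ) < Complex.abs z := by linarith
      set c : ℝ := (r - ε)/Complex.abs z with hc
      set z' : ℂ := (c : ℝ) • z with hz'
      have hre : 0 ≤ r - ε := by linarith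
      have hc0 : 0 ≤ c := by positivity
      have hz'abs : Complex.abs z' = r - ε := by
        rw [hz', Complex.real_smul, map_mul, Complex.abs_ofReal,
          _root_.abs_of_nonneg hc0, hc]
        field_simp
      have hdzz' : dist z' z = Complex.abs z - (r - ε) := by
        rw [Complex.dist_eq]
        have heq2 : z' - z = ((c - 1 : ℝ) : ℂ) * z := by
          rw [hz', Complex.real_smul]; push_cast; ring
        rw [heq2, map_mul, Complex.abs_ofReal]
        have hc1 : c ≤ 1 := by rw [hc, div_le_one hz0]; linarith
        rw [_root_.abs_of_nonpos (by linarith), hc]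
        field_simp
        ring
      have hdzz'lt : dist z' z < 2*ε := by rw [hdzz']; linarith
      have hz'1 : dist z' ζ₁ < δf ζ₁ := by
        calc dist z' ζ₁ ≤ dist z' z + dist z ζ₁ := dist_triangle _ _ _
          _ < 2*ε + δf ζ₁/2 := by linarith
          _ ≤ 2*(δf ζ₁/6) + δf ζ₁/2 := by linarith [hεle ζ₁ h₁]
          _ < δf ζ₁ := by linarith
      have hz'2 : dist z' ζ₂ < δf ζ₂ := by
        calc dist z' ζ₂ ≤ dist z' z + dist z ζ₂ := dist_triangle _ _ _
          _ < 2*ε + δf ζ₂/2 := by linarith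
          _ ≤ 2*(δf ζ₂/6) + δf ζ₂/2 := by linarith [hεle ζ₂ h₂]
          _ < δf ζ₂ := by linarith
      set V := ball ζ₁ (δf ζ₁) ∩ (ball ζ₂ (δf ζ₂) ∩ ball (0:ℂ) (r + ε)) with hV
      have hVopen : IsOpen V := isOpen_ball.inter (isOpen_ball.inter isOpen_ball)
      have hVpre : IsPreconnected V :=
        ((convex_ball _ _).inter ((convex_ball _ _).inter (convex_ball _ _))).isPreconnected
      have hz'V : z' ∈ V := ⟨mem_ball.mpr hz'1, mem_ball.mpr hz'2,
        mem_ball_zero'.mpr (by rw [hz'abs]; linarith)⟩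
      have hzV : z ∈ V := ⟨mem_ball.mpr (by linarith), mem_ball.mpr (by linarith),
        mem_ball_zero'.mpr hz⟩
      have hz'in : z' ∈ ball (0:ℂ) r := mem_ball_zero'.mpr (by rw [hz'abs]; linarith)
      have hev : mpf ζ₁ =ᶠ[𝓝 z'] mpf ζ₂ := by
        have hop : IsOpen (ball ζ₁ (δf ζ₁) ∩ ball ζ₂ (δf ζ₂) ∩ ball (0:ℂ) r) :=
          (isOpen_ball.inter isOpen_ball).inter isOpen_ball
        have hmem : z' ∈ ball ζ₁ (δf ζ₁) ∩ ball ζ₂ (δf ζ₂) ∩ ball (0:ℂ) r :=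
          ⟨⟨mem_ball.mpr hz'1, mem_ball.mpr hz'2⟩, hz'in⟩
        filter_upwards [hop.eventually_mem hmem] with x hx
        rw [← hEqOn ζ₁ habs₁ ⟨hx.1.1, hx.2⟩, ← hEqOn ζ₂ habs₂ ⟨hx.1.2, hx.2⟩]
      have ha1 : AnalyticOnNhd ℂ (mpf ζ₁) V :=
        ((hdiff ζ₁ habs₁).mono inter_subset_left).analyticOnNhd hVopen
      have ha2 : AnalyticOnNhd ℂ (mpf ζ₂) V :=
        ((hdiff ζ₂ habs₂).mono (fun x hx => hx.2.1)).analyticOnNhd hVopen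
      exact ha1.eqOn_of_preconnected_of_eventuallyEq ha2 hVpre hz'V hev hzV
  set Mf : ℂ → ℂ := fun z =>
    if Complex.abs z < r then m z
    else if h : ∃ ζ ∈ t, dist z ζ < δf ζ / 2 then mpf h.choose z else 0
    with hMf
  have hMf_lt : ∀ z : ℂ, Complex.abs z < r → Mf z = m z := fun z hz => if_pos hz
  have hMf_ge : ∀ z : ℂ, r ≤ Complex.abs z → Complex.abs z < r + ε →
      ∀ ζ ∈ t, dist z ζ < δf ζ/2 → Mf z = mpf ζ z := by
    intro z h1 h2 ζ hζ hd
    have hex : ∃ ζ' ∈ t, dist z ζ' < δf ζ'/2 := ⟨ζ, hζ, hd⟩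
    have : Mf z = mpf hex.choose z := by
      rw [hMf]
      simp only [if_neg (not_lt.mpr h1), dif_pos hex]
    rw [this]
    exact hcompat _ hex.choose_spec.1 _ hζ z hex.choose_spec.2 hd h2
  have hMf_ev : ∀ z₀ : ℂ, Complex.abs z₀ < r + ε → ∃ f₀ : ℂ → ℂ,
      Mf =ᶠ[𝓝 z₀] f₀ ∧ DifferentiableAt ℂ f₀ z₀ := by
    intro z₀ hz₀
    rcases lt_or_ge (Complex.abs z₀) r with h | h
    · refine ⟨m, ?_, hm.1.differentiableAt (isOpen_ball.mem_nhds (mem_ball_zero'.mpr h))⟩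
      filter_upwards [isOpen_ball.eventually_mem (mem_ball_zero'.mpr h)] with x hx
      exact hMf_lt x (mem_ball_zero'.mp hx)
    · obtain ⟨ζ₀, hζ₀t, hdζ₀⟩ := hindex z₀ h hz₀
      have hδ₀ := δpos ζ₀ (htabs ζ₀ hζ₀t)
      refine ⟨mpf ζ₀, ?_, ?_⟩
      · have hκ : 0 < min (δf ζ₀/2 - dist z₀ ζ₀) (r + ε - Complex.abs z₀) :=
          lt_min (by linarith) (by linarith)
        filter_upwards [Metric.ball_mem_nhds z₀ hκ] with z hzball
        have hz1 : dist z ζ₀ < δf ζ₀/2 := by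
          have h1 : dist z z₀ < δf ζ₀ / 2 - dist z₀ ζ₀ :=
            lt_of_lt_of_le hzball (min_le_left _ _)
          calc dist z ζ₀ ≤ dist z z₀ + dist z₀ ζ₀ := dist_triangle _ _ _
            _ < δf ζ₀/2 := by linarith
        have hz2 : Complex.abs z < r + ε := by
          have h2 : dist z z₀ < r + ε - Complex.abs z₀ :=
            lt_of_lt_of_le hzball (min_le_right _ _)
          have h3 : Complex.abs z ≤ Complex.abs (z - z₀) + Complex.abs z₀ := by
            calc Complex.abs z = Complex.abs (z - z₀ + z₀) := by congr 1; ring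
              _ ≤ Complex.abs (z - z₀) + Complex.abs z₀ := Complex.abs.add_le _ _
          rw [Complex.dist_eq] at h2
          linarith
        rcases lt_or_ge (Complex.abs z) r with hzr | hzr
        · rw [hMf_lt z hzr]
          exact hEqOn ζ₀ (htabs ζ₀ hζ₀t)
            ⟨mem_ball.mpr (by linarith), mem_ball_zero'.mpr hzr⟩
        · exact hMf_ge z hzr hz2 ζ₀ hζ₀t hz1
      · apply (hdiff ζ₀ (htabs ζ₀ hζ₀t)).differentiableAt
        exact isOpen_ball.mem_nhds (mem_ball.mpr (by linarith))
  refine ⟨r + ε, by linarith, by linarith, Mf, ?_, ?_, ?_, ?_⟩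
  · intro z hz
    obtain ⟨f₀, hev, hdiff₀⟩ := hMf_ev z (mem_ball_zero'.mp hz)
    exact (hev.differentiableAt_iff.mpr hdiff₀).differentiableWithinAt
  · rw [hMf_lt 0 (by simpa using h0)]
    exact hm.2.1
  · have hev0 : Mf =ᶠ[𝓝 0] m := by
      have h00 : (0:ℂ) ∈ ball (0:ℂ) r := mem_ball_zero'.mpr (by simpa using h0)
      filter_upwards [isOpen_ball.eventually_mem h00] with x hx
      exact hMf_lt x (mem_ball_zero'.mp hx)
    rw [hev0.deriv_eq]
    exact hm.2.2.1
  · intro z hz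
    rcases lt_or_ge (Complex.abs z) r with h | h
    · rw [hMf_lt z h]
      exact hm.2.2.2 z (mem_ball_zero'.mpr h)
    · have hz2 : Complex.abs z < r + ε := mem_ball_zero'.mp hz
      obtain ⟨ζ₀, hζ₀t, hd⟩ := hindex z h hz2
      have hδ₀ := δpos ζ₀ (htabs ζ₀ hζ₀t)
      rw [hMf_ge z h hz2 ζ₀ hζ₀t hd]
      exact heq ζ₀ (htabs ζ₀ hζ₀t) z (mem_ball.mpr (by linarith))

lemma P_RR : P RR := by
  obtain ⟨r₀, hr₀pos, hr₀le, hsol₀⟩ := sol_germ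
  set A : Set ℝ := {r | 0 < r ∧ r ≤ RR ∧ P r} with hA
  have hr₀A : r₀ ∈ A := ⟨hr₀pos, hr₀le, G, hsol₀⟩
  have hbdd : BddAbove A := ⟨RR, fun x hx => hx.2.1⟩
  have hune : A.Nonempty := ⟨r₀, hr₀A⟩
  have hu_le : sSup A ≤ RR := csSup_le hune (fun x hx => hx.2.1)
  have hu_pos : 0 < sSup A := lt_of_lt_of_le hr₀pos (le_csSup hbdd hr₀A)
  have hPu : P (sSup A) := by
    apply P_limit hu_pos
    intro s hs1 hs2
    obtain ⟨a, haA, hsa⟩ := exists_lt_of_lt_csSup hune hs2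
    obtain ⟨ma, hma⟩ := haA.2.2
    exact ⟨ma, sol_mono hma (le_of_lt hsa)⟩
  rcases eq_or_lt_of_le hu_le with heq | hlt
  · rwa [heq] at hPu
  · obtain ⟨r', hr'1, hr'2, hPr'⟩ := extend hu_pos hlt hPu
    have hr'A : r' ∈ A := ⟨lt_trans hu_pos hr'1, hr'2, hPr'⟩
    linarith [le_csSup hbdd hr'A]

end Stmt19

/-- there is a holomorphic function `ℓ` on the disc `|z| < 2√π` with `ℓ(0)=0`,
`ℓ'(0)=1` and `(1-ℓ(z)) e^{ℓ(z)} = e^{-z²/2}` (the branch `ℓ(z) = W(-e^{-1-z²/2}) + 1` of the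
Lambert W-function). -/
theorem stmt19 :
    ∃ l : ℂ → ℂ,
      DifferentiableOn ℂ l (Metric.ball (0 : ℂ) (2 * Real.sqrt Real.pi)) ∧
      l 0 = 0 ∧ deriv l 0 = 1 ∧
      ∀ z ∈ Metric.ball (0 : ℂ) (2 * Real.sqrt Real.pi),
        (1 - l z) * Complex.exp (l z) = Complex.exp (-z ^ 2 / 2) := by
  obtain ⟨m, hm⟩ := Stmt19.P_RR
  have hball : Metric.ball (0 : ℂ) (2 * Real.sqrt Real.pi) = Metric.ball (0:ℂ) Stmt19.RR := rfl
  refine ⟨fun z => 1 - Complex.exp (-(m z)), ?_, ?_, ?_, ?_⟩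
  · rw [hball]
    intro z hz
    exact (differentiableWithinAt_const _).sub ((hm.1 z hz).neg.cexp)
  · simp [hm.2.1]
  · have h0 : (0:ℂ) ∈ Metric.ball (0:ℂ) Stmt19.RR := Metric.mem_ball_self Stmt19.RR_pos
    have hmd : HasDerivAt m 1 0 := by
      have := (hm.1.differentiableAt (Metric.isOpen_ball.mem_nhds h0)).hasDerivAt
      rwa [hm.2.2.1] at this
    have h2 : HasDerivAt (fun z => Complex.exp (-(m z))) (Complex.exp (-(m 0)) * (-1)) 0 :=
      (Complex.hasDerivAt_exp (-(m 0))).comp 0 hmd.neg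
    have h3 := (hasDerivAt_const (0:ℂ) (1:ℂ)).sub h2
    have h4 : (0 : ℂ) - Complex.exp (-(m 0)) * (-1) = 1 := by
      rw [hm.2.1]
      simp
    rw [h4] at h3
    exact h3.deriv
  · rw [hball]
    intro z hz
    have heqz := hm.2.2.2 z hz
    have hphi : -(m z) + (1 - Complex.exp (-(m z))) = -(Stmt19.phi (m z)) + 1 - 1 := by
      rw [Stmt19.phi]; ring
    calc (1 - (1 - Complex.exp (-(m z)))) * Complex.exp (1 - Complex.exp (-(m z)))
        = Complex.exp (-(m z)) * Complex.exp (1 - Complex.exp (-(m z))) := by ring_nf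
      _ = Complex.exp (-(m z) + (1 - Complex.exp (-(m z)))) := (Complex.exp_add _ _).symm
      _ = Complex.exp (-(z^2/2)) := by
          rw [hphi, heqz]; ring_nf
      _ = Complex.exp (-z^2/2) := by ring_nf
end
end
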